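/- arXiv:1802.09224 — 3 statements merged into one kernel-verified Lean document; each statement's English description precedes it below -/
import Mathlib

section
/- (Hölder-continuous observation families.) Suppose each U(t,0) is an isometry on H, the observation family satisfies the Hölder estimate ‖C(t)v − C(s)v‖_Y ≤ L₀·|t−s|^α·‖ι v‖_H for all s, t ∈ [0,τ], v ∈ D and some constants L₀ > 0, α > 0, and the double-averaged observability estimate κ·‖ι x‖²_H ≤ ∫₀^τ∫₀^τ ‖C(s)(Ũ(t,0)x)‖²_Y ds dt holds for all x ∈ D with κ > 0. Then for all x ∈ D: κ·‖ι x‖²_H ≤ (2·L₀²·τ^(2α+2)/((2α+1)(α+1)))·‖ι x‖²_H + 2τ·∫₀^τ ‖C(t)(Ũ(t,0)x)‖²_Y dt. In particular, if 2·L₀²·τ^(2α+2)/((2α+1)(α+1)) < κ, then the system is exactly averaged observable in time τ. -/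
open MeasureTheory

set_option maxHeartbeats 2000000 in
open Set Filter Topology TopologicalSpace intervalIntegral in
/-- Remark: Hölder-continuous observation families.

Suppose each `U t 0` is an isometry on `H`, the observation family satisfies the
Hölder estimate `‖C(t)v − C(s)v‖ ≤ L₀|t−s|^α ‖ι v‖`, and the double-averaged
observability estimate `κ‖ι x‖² ≤ ∫₀^τ∫₀^τ ‖C(s)(Ũ(t,0)x)‖² ds dt` holds.
Then `κ‖ι x‖² ≤ (2L₀²τ^{2α+2}/((2α+1)(α+1)))‖ι x‖² + 2τ∫₀^τ ‖C(t)(Ũ(t,0)x)‖² dt`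
for all `x ∈ D`; in particular, if `2L₀²τ^{2α+2}/((2α+1)(α+1)) < κ`, then the
system is exactly averaged observable in time `τ`. -/
theorem averaged_observability_holder_observation
    {H Y D : Type*}
    [NormedAddCommGroup H] [InnerProductSpace ℂ H] [CompleteSpace H]
    [NormedAddCommGroup Y] [InnerProductSpace ℂ Y] [CompleteSpace Y]
    [NormedAddCommGroup D] [InnerProductSpace ℂ D] [CompleteSpace D]
    (τ : ℝ) (hτ : 0 < τ)
    (ι : D →L[ℂ] H) (hι_inj : Function.Injective ι) (hι_dense : DenseRange ι)
    (A : ℝ → D →L[ℂ] H) (C : ℝ → D →L[ℂ] Y)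
    (U : ℝ → ℝ → H →L[ℂ] H) (Ut : ℝ → ℝ → D →ₗ[ℂ] D)
    -- ι ∘ Ũ(t,s) = U(t,s) ∘ ι
    (hcompat : ∀ t s : ℝ, ∀ v : D, ι (Ut t s v) = U t s (ι v))
    -- U(s,s) = I
    (hid : ∀ s : ℝ, U s s = ContinuousLinearMap.id ℂ H)
    -- U(t,s) U(s,r) = U(t,r)
    (hcocycle : ∀ r s t : ℝ, 0 ≤ r → r ≤ s → s ≤ t → t ≤ τ →
      (U t s).comp (U s r) = U t r)
    -- t ↦ U(t,s)(ι v) is differentiable with derivative −A(t)(Ũ(t,s)v)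
    (hderiv_t : ∀ s ∈ Set.Icc (0:ℝ) τ, ∀ v : D, ∀ t ∈ Set.Icc s τ,
      HasDerivWithinAt (fun r => U r s (ι v)) (-(A t (Ut t s v))) (Set.Icc s τ) t)
    -- each U(t,0) is an isometry on H
    (hisom : ∀ t ∈ Set.Icc (0:ℝ) τ, ∀ x : H, ‖U t 0 x‖ = ‖x‖)
    -- Hölder estimate on the observation family
    (L₀ α : ℝ) (hL₀ : 0 < L₀) (hα : 0 < α)
    (hHolder : ∀ s ∈ Set.Icc (0:ℝ) τ, ∀ t ∈ Set.Icc (0:ℝ) τ, ∀ v : D,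
      ‖C t v - C s v‖ ≤ L₀ * |t - s| ^ α * ‖ι v‖)
    -- the double-averaged observability estimate
    (κ : ℝ) (hκ : 0 < κ)
    (hdouble : ∀ x : D,
      κ * ‖ι x‖^2 ≤ ∫ t in (0:ℝ)..τ, ∫ s in (0:ℝ)..τ, ‖C s (Ut t 0 x)‖^2) :
    (∀ x : D,
      κ * ‖ι x‖^2 ≤
        (2 * L₀^2 * τ ^ (2*α + 2) / ((2*α + 1) * (α + 1))) * ‖ι x‖^2
          + 2 * τ * ∫ t in (0:ℝ)..τ, ‖C t (Ut t 0 x)‖^2) ∧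
    (2 * L₀^2 * τ ^ (2*α + 2) / ((2*α + 1) * (α + 1)) < κ →
      ∃ κ' > (0:ℝ), ∀ x : D,
        ∫ t in (0:ℝ)..τ, ‖C t (Ut t 0 x)‖^2 ≥ κ' * ‖ι x‖^2) := by
  classical
  have key : ∀ x : D,
      κ * ‖ι x‖^2 ≤
        (2 * L₀^2 * τ ^ (2*α + 2) / ((2*α + 1) * (α + 1))) * ‖ι x‖^2
          + 2 * τ * ∫ t in (0:ℝ)..τ, ‖C t (Ut t 0 x)‖^2 := by
    intro x
    have hd := hdouble x
    set M : ℝ := ‖ι x‖ with hM_def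
    set v : ℝ → D := fun t => Ut t 0 x with hv_def
    set w : ℝ → H := fun t => U t 0 (ι x) with hw_def
    set φ : ℝ → ℝ := fun t => ‖C t (v t)‖^2 with hφ_def
    set G : ℝ → ℝ := fun t => ∫ s in (0:ℝ)..τ, ‖C s (v t)‖^2 with hG_def
    set cc : ℝ → ℝ := fun t => ∫ s in (0:ℝ)..τ, |t - s| ^ (2*α) with hcc_def
    have hIcc0 : (0:ℝ) ∈ Set.Icc (0:ℝ) τ := ⟨le_refl 0, hτ.le⟩
    have hvw : ∀ t, ι (v t) = w t := fun t => hcompat t 0 x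
    have hw_cont : ContinuousOn w (Set.Icc 0 τ) := fun t ht =>
      (hderiv_t 0 hIcc0 x t ht).continuousWithinAt
    have hMt : ∀ t ∈ Set.Icc (0:ℝ) τ, ‖ι (v t)‖ = M := by
      intro t ht; rw [hvw]; exact hisom t ht (ι x)
    have hM0 : 0 ≤ M := norm_nonneg _
    -- Hölder for the trajectory
    have hHol : ∀ s ∈ Set.Icc (0:ℝ) τ, ∀ t ∈ Set.Icc (0:ℝ) τ, ∀ r ∈ Set.Icc (0:ℝ) τ,
        ‖C s (v r) - C t (v r)‖ ≤ L₀ * |s - t| ^ α * M := by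
      intro s hs t ht r hr
      have := hHolder t ht s hs (v r)
      rwa [hMt r hr] at this
    -- basic limits
    have habs0 : Filter.Tendsto (fun u : ℝ => |u| ^ α) (nhds 0) (nhds 0) := by
      have h1 : ContinuousAt (fun u : ℝ => |u| ^ α) 0 :=
        (Real.continuousAt_rpow_const |(0:ℝ)| α (Or.inr hα.le)).comp
          continuous_abs.continuousAt
      simpa [Real.zero_rpow hα.ne'] using h1.tendsto
    -- continuity of s ↦ C s v₀
    have hcont_Cv : ∀ v0 : D, ContinuousOn (fun s => C s v0) (Set.Icc 0 τ) := by
      intro v0 s hs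
      have h2 : Filter.Tendsto (fun s' : ℝ => s' - s) (nhdsWithin s (Set.Icc 0 τ)) (nhds 0) := by
        have h : Filter.Tendsto (fun s' : ℝ => s' - s) (nhds s) (nhds (s - s)) :=
          (continuous_id.sub continuous_const).tendsto s
        rw [sub_self] at h
        exact h.mono_left nhdsWithin_le_nhds
      have hb : Filter.Tendsto (fun s' => L₀ * |s' - s| ^ α * ‖ι v0‖)
          (nhdsWithin s (Set.Icc 0 τ)) (nhds 0) := by
        have h4 := ((habs0.comp h2).const_mul L₀).mul_const ‖ι v0‖
        simpa using h4
      rw [ContinuousWithinAt, tendsto_iff_norm_sub_tendsto_zero]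
      refine squeeze_zero' ?_ ?_ hb
      · exact Filter.Eventually.of_forall fun _ => norm_nonneg _
      · exact Filter.eventually_of_mem self_mem_nhdsWithin fun s' hs' =>
          hHolder s hs s' hs' v0
    -- continuity of the "incremental" part  t ↦ C t (v t) - C 0 (v t)
    have hf_cont : ContinuousOn (fun t => C t (v t) - C 0 (v t)) (Set.Icc 0 τ) := by
      intro t ht
      have h2 : Filter.Tendsto (fun t' : ℝ => t' - t) (nhdsWithin t (Set.Icc 0 τ)) (nhds 0) := by
        have h : Filter.Tendsto (fun t' : ℝ => t' - t) (nhds t) (nhds (t - t)) :=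
          (continuous_id.sub continuous_const).tendsto t
        rw [sub_self] at h
        exact h.mono_left nhdsWithin_le_nhds
      have hw0 : Filter.Tendsto (fun t' => ‖w t' - w t‖) (nhdsWithin t (Set.Icc 0 τ)) (nhds 0) :=
        tendsto_iff_norm_sub_tendsto_zero.mp (hw_cont t ht)
      have hb : Filter.Tendsto
          (fun t' => L₀ * |t' - t| ^ α * M + L₀ * τ ^ α * ‖w t' - w t‖)
          (nhdsWithin t (Set.Icc 0 τ)) (nhds 0) := by
        have h4 := ((habs0.comp h2).const_mul L₀).mul_const M
        have h5 := hw0.const_mul (L₀ * τ ^ α)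
        have h6 := h4.add h5
        simpa using h6
      rw [ContinuousWithinAt, tendsto_iff_norm_sub_tendsto_zero]
      refine squeeze_zero' (Filter.Eventually.of_forall fun _ => norm_nonneg _) ?_ hb
      refine Filter.eventually_of_mem self_mem_nhdsWithin fun t' ht' => ?_
      have e1 : (C t' (v t') - C 0 (v t')) - (C t (v t) - C 0 (v t))
          = (C t' (v t') - C t (v t')) + (C t (v t' - v t) - C 0 (v t' - v t)) := by
        simp only [map_sub]; abel
      rw [e1]
      have hb1 : ‖C t' (v t') - C t (v t')‖ ≤ L₀ * |t' - t| ^ α * M :=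
        hHol t' ht' t ht t' ht'
      have hb2 : ‖C t (v t' - v t) - C 0 (v t' - v t)‖ ≤ L₀ * τ ^ α * ‖w t' - w t‖ := by
        have h := hHolder 0 hIcc0 t ht (v t' - v t)
        have hι : ‖ι (v t' - v t)‖ = ‖w t' - w t‖ := by
          rw [map_sub, hvw, hvw]
        rw [hι, sub_zero] at h
        refine h.trans ?_
        have htτ : |t| ^ α ≤ τ ^ α :=
          Real.rpow_le_rpow (abs_nonneg _) (by rw [abs_of_nonneg ht.1]; exact ht.2) hα.le
        have : L₀ * |t| ^ α ≤ L₀ * τ ^ α := by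
          exact mul_le_mul_of_nonneg_left htτ hL₀.le
        exact mul_le_mul_of_nonneg_right this (norm_nonneg _)
      calc ‖(C t' (v t') - C t (v t')) + (C t (v t' - v t) - C 0 (v t' - v t))‖
          ≤ ‖C t' (v t') - C t (v t')‖ + ‖C t (v t' - v t) - C 0 (v t' - v t)‖ :=
            norm_add_le _ _
        _ ≤ L₀ * |t' - t| ^ α * M + L₀ * τ ^ α * ‖w t' - w t‖ := add_le_add hb1 hb2
    -- density of the range of the adjoint of ι
    have hadj : ∀ d : D, ∀ ε > (0:ℝ), ∃ h : H, ‖(ContinuousLinearMap.adjoint ι) h - d‖ < ε := by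
      have hdense : ∀ d : D,
          d ∈ closure ((LinearMap.range ((ContinuousLinearMap.adjoint ι : H →L[ℂ] D) : H →ₗ[ℂ] D) : Submodule ℂ D) : Set D) := by
        have hbot : (LinearMap.range ((ContinuousLinearMap.adjoint ι : H →L[ℂ] D) : H →ₗ[ℂ] D) : Submodule ℂ D)ᗮ = ⊥ := by
          rw [Submodule.eq_bot_iff]
          intro r hr
          have h1 : ∀ h : H, (inner ℂ ((ContinuousLinearMap.adjoint ι) h) r : ℂ) = 0 := by
            intro h
            exact (Submodule.mem_orthogonal _ r).1 hr _ (LinearMap.mem_range_self _ h)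
          have h2 : (inner ℂ (ι r) (ι r) : ℂ) = 0 := by
            have h3 := h1 (ι r)
            rwa [ContinuousLinearMap.adjoint_inner_left] at h3
          have h3 : ι r = 0 := inner_self_eq_zero.1 h2
          have h4 : ι r = ι 0 := by rw [h3, map_zero]
          exact hι_inj h4
        have hclos : (LinearMap.range ((ContinuousLinearMap.adjoint ι : H →L[ℂ] D) : H →ₗ[ℂ] D) :
            Submodule ℂ D).topologicalClosure = ⊤ := by
          rw [← Submodule.orthogonal_orthogonal_eq_closure, hbot,
            Submodule.bot_orthogonal_eq_top]
        intro d
        have h5 : closure ((LinearMap.range ((ContinuousLinearMap.adjoint ι : H →L[ℂ] D) : H →ₗ[ℂ] D) :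
            Submodule ℂ D) : Set D) = Set.univ := by
          rw [← Submodule.topologicalClosure_coe, hclos, Submodule.top_coe]
        rw [h5]; trivial
      intro d ε hε
      obtain ⟨y, hy_mem, hy⟩ := Metric.mem_closure_iff.1 (hdense d) ε hε
      obtain ⟨h, rfl⟩ := hy_mem
      refine ⟨h, ?_⟩
      rw [← dist_eq_norm, dist_comm]
      exact hy
    -- weak measurability of v
    have hinner_meas : ∀ d : D, AEMeasurable (fun t => (inner ℂ d (v t) : ℂ))
        (volume.restrict (Set.Ioc 0 τ)) := by
      intro d
      have hchoice : ∀ m : ℕ, ∃ h : H,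
          ‖(ContinuousLinearMap.adjoint ι) h - d‖ < 1/((m:ℝ)+1) :=
        fun m => hadj d (1/((m:ℝ)+1)) (by positivity)
      choose hh hhp using hchoice
      have hmeas : ∀ m : ℕ, AEMeasurable (fun t => (inner ℂ (hh m) (w t) : ℂ))
          (volume.restrict (Set.Ioc 0 τ)) := by
        intro m
        exact (continuousOn_const.inner (hw_cont.mono Set.Ioc_subset_Icc_self)).aemeasurable
          measurableSet_Ioc
      refine aemeasurable_of_tendsto_metrizable_ae Filter.atTop hmeas ?_
      refine Filter.Eventually.of_forall fun t => ?_
      rw [tendsto_iff_norm_sub_tendsto_zero]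
      have hb : ∀ m : ℕ, ‖(inner ℂ (hh m) (w t) : ℂ) - (inner ℂ d (v t) : ℂ)‖
          ≤ (1/((m:ℝ)+1)) * ‖v t‖ := by
        intro m
        have e : (inner ℂ (hh m) (w t) : ℂ)
            = inner ℂ ((ContinuousLinearMap.adjoint ι) (hh m)) (v t) := by
          rw [ContinuousLinearMap.adjoint_inner_left, hvw]
        rw [e, ← inner_sub_left]
        exact (norm_inner_le_norm _ _).trans
          (mul_le_mul_of_nonneg_right (hhp m).le (norm_nonneg _))
      refine squeeze_zero_norm (fun m => by simpa using hb m) ?_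
      have h8 := tendsto_one_div_add_atTop_nhds_zero_nat.mul_const ‖v t‖
      simpa using h8
    -- separable range of v
    have hvmem : ∃ sD : Set D, sD.Countable ∧ ∀ t ∈ Set.Icc (0:ℝ) τ,
        v t ∈ closure ((Submodule.span ℂ sD : Submodule ℂ D) : Set D) := by
      have hQ : ∀ n : ℕ, ∃ Q : Set ℝ, Q.Countable
          ∧ Q ⊆ {r | r ∈ Set.Icc (0:ℝ) τ ∧ ‖v r‖ ≤ (n:ℝ)}
          ∧ ∀ t ∈ {r | r ∈ Set.Icc (0:ℝ) τ ∧ ‖v r‖ ≤ (n:ℝ)}, t ∈ closure Q := by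
        intro n
        obtain ⟨u, hu_count, hu_dense⟩ :=
          TopologicalSpace.exists_countable_dense ↥{r | r ∈ Set.Icc (0:ℝ) τ ∧ ‖v r‖ ≤ (n:ℝ)}
        refine ⟨Subtype.val '' u, hu_count.image _, ?_, ?_⟩
        · rintro q ⟨q', _, rfl⟩; exact q'.2
        · intro t htE
          have h2 : (⟨t, htE⟩ : ↥{r | r ∈ Set.Icc (0:ℝ) τ ∧ ‖v r‖ ≤ (n:ℝ)}) ∈ closure u := by
            rw [hu_dense.closure_eq]; trivial
          exact closure_subtype.1 h2
      choose Q hQc hQsub hQdense using hQ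
      refine ⟨⋃ n : ℕ, v '' Q n, Set.countable_iUnion (fun n => (hQc n).image v), ?_⟩
      intro t ht
      have horth : v t ∈ (Submodule.span ℂ (⋃ n : ℕ, v '' Q n))ᗮᗮ := by
        rw [Submodule.mem_orthogonal]
        intro r hr
        obtain ⟨n, hn⟩ := exists_nat_ge ‖v t‖
        have htE : t ∈ {r | r ∈ Set.Icc (0:ℝ) τ ∧ ‖v r‖ ≤ (n:ℝ)} := ⟨ht, hn⟩
        have hkey : ∀ ε > (0:ℝ), ‖(inner ℂ r (v t) : ℂ)‖ ≤ ε := by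
          intro ε hε
          have hXne : (0:ℝ) < ‖v t‖ + (n:ℝ) + 1 := by positivity
          set ε₁ := ε / (2*(‖v t‖ + (n:ℝ) + 1)) with hε₁
          have hε₁pos : 0 < ε₁ := by positivity
          obtain ⟨h, hhr⟩ := hadj r ε₁ hε₁pos
          set dd := (ContinuousLinearMap.adjoint ι) h with hdd
          -- choose q ∈ Q n close to t
          have hcont : ContinuousWithinAt (fun r' => (inner ℂ h (w r') : ℂ)) (Q n) t :=
            ((continuousOn_const.inner hw_cont) t ht).mono (fun q hq => (hQsub n hq).1)
          have hnebot : (nhdsWithin t (Q n)).NeBot :=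
            mem_closure_iff_nhdsWithin_neBot.1 (hQdense n t htE)
          have hev := Metric.tendsto_nhds.1 hcont (ε/2) (by linarith)
          obtain ⟨q, hq_close, hqQ⟩ := (hev.and eventually_mem_nhdsWithin).exists
          have hqE := hQsub n hqQ
          have hvqK : v q ∈ Submodule.span ℂ (⋃ n : ℕ, v '' Q n) :=
            Submodule.subset_span (Set.mem_iUnion.2 ⟨n, ⟨q, hqQ, rfl⟩⟩)
          have e1 : (inner ℂ dd (v q) : ℂ) = inner ℂ h (w q) := by
            rw [hdd, ContinuousLinearMap.adjoint_inner_left, hvw]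
          have e2 : (inner ℂ dd (v t) : ℂ) = inner ℂ h (w t) := by
            rw [hdd, ContinuousLinearMap.adjoint_inner_left, hvw]
          have hr0 : (inner ℂ r (v q) : ℂ) = 0 :=
            (Submodule.mem_orthogonal' _ r).1 hr (v q) hvqK
          have h5 : ‖(inner ℂ h (w q) : ℂ)‖ ≤ ε₁ * n := by
            calc ‖(inner ℂ h (w q) : ℂ)‖ = ‖(inner ℂ (dd - r) (v q) : ℂ)‖ := by
                  rw [inner_sub_left, hr0, sub_zero, e1]
              _ ≤ ‖dd - r‖ * ‖v q‖ := norm_inner_le_norm _ _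
              _ ≤ ε₁ * n := mul_le_mul hhr.le hqE.2 (norm_nonneg _) hε₁pos.le
          have h7 : ‖(inner ℂ h (w t) : ℂ)‖
              ≤ ‖(inner ℂ h (w t) : ℂ) - (inner ℂ h (w q) : ℂ)‖ + ‖(inner ℂ h (w q) : ℂ)‖ := by
            simpa using norm_add_le ((inner ℂ h (w t) : ℂ) - (inner ℂ h (w q) : ℂ))
              ((inner ℂ h (w q) : ℂ))
          have h7b : ‖(inner ℂ h (w t) : ℂ) - (inner ℂ h (w q) : ℂ)‖ < ε/2 := by
            rw [norm_sub_rev, ← dist_eq_norm]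
            exact hq_close
          have h8 : ‖(inner ℂ r (v t) : ℂ)‖
              ≤ ‖(inner ℂ (r - dd) (v t) : ℂ)‖ + ‖(inner ℂ dd (v t) : ℂ)‖ := by
            have e3 : (inner ℂ r (v t) : ℂ) = inner ℂ (r - dd) (v t) + inner ℂ dd (v t) := by
              rw [inner_sub_left]; ring
            rw [e3]; exact norm_add_le _ _
          have h9 : ‖(inner ℂ (r - dd) (v t) : ℂ)‖ ≤ ε₁ * ‖v t‖ := by
            refine (norm_inner_le_norm _ _).trans ?_
            rw [norm_sub_rev]
            exact mul_le_mul_of_nonneg_right hhr.le (norm_nonneg _)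
          have hX : ε₁ * (‖v t‖ + (n:ℝ) + 1) = ε/2 := by
            rw [hε₁]; field_simp
          have hXb : ε₁ * ‖v t‖ + ε₁ * n ≤ ε/2 := by nlinarith
          rw [e2] at h8
          linarith
        have hz : (inner ℂ r (v t) : ℂ) = 0 := by
          by_contra hne
          have hpos : 0 < ‖(inner ℂ r (v t) : ℂ)‖ := norm_pos_iff.2 hne
          have h10 := hkey (‖(inner ℂ r (v t) : ℂ)‖/2) (by positivity)
          linarith
        exact hz
      have h11 : v t ∈ ((Submodule.span ℂ (⋃ n : ℕ, v '' Q n)).topologicalClosure : Set D) := by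
        rw [← Submodule.orthogonal_orthogonal_eq_closure]
        exact horth
      rwa [Submodule.topologicalClosure_coe] at h11
    -- separable range of t ↦ C t (v t)
    have hymem : ∃ c : Set Y, c.Countable ∧ ∀ t ∈ Set.Icc (0:ℝ) τ,
        C t (v t) ∈ closure ((Submodule.span ℂ c : Submodule ℂ Y) : Set Y) := by
      obtain ⟨sD, hsD_count, hsD_mem⟩ := hvmem
      obtain ⟨u0, hu0_count, hu0_dense⟩ :=
        TopologicalSpace.exists_countable_dense ↥(Set.Icc (0:ℝ) τ)
      set Q0 : Set ℝ := Subtype.val '' u0 with hQ0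
      have hQ0c : Q0.Countable := hu0_count.image _
      have hQ0sub : Q0 ⊆ Set.Icc 0 τ := by rintro q ⟨q', _, rfl⟩; exact q'.2
      have hQ0dense : ∀ t ∈ Set.Icc (0:ℝ) τ, t ∈ closure Q0 := by
        intro t ht
        have h2 : (⟨t, ht⟩ : ↥(Set.Icc (0:ℝ) τ)) ∈ closure u0 := by
          rw [hu0_dense.closure_eq]; trivial
        exact closure_subtype.1 h2
      refine ⟨(C 0 '' sD) ∪ ((fun t => C t (v t) - C 0 (v t)) '' Q0),
        ((hsD_count.image _).union (hQ0c.image _)), ?_⟩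
      intro t ht
      set W : Submodule ℂ Y :=
        Submodule.span ℂ ((C 0 '' sD) ∪ ((fun t => C t (v t) - C 0 (v t)) '' Q0)) with hW
      have h1 : C 0 (v t) ∈ closure (W : Set Y) := by
        have hv2 := hsD_mem t ht
        have h2 : C 0 (v t) ∈ closure (C 0 '' ((Submodule.span ℂ sD : Submodule ℂ D) : Set D)) :=
          image_closure_subset_closure_image (C 0).continuous (Set.mem_image_of_mem _ hv2)
        refine closure_mono ?_ h2
        rintro y ⟨zz, hzz, rfl⟩
        have hmap : C 0 zz ∈ Submodule.map (C 0 : D →ₗ[ℂ] Y) (Submodule.span ℂ sD) :=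
          Submodule.mem_map_of_mem hzz
        rw [Submodule.map_span] at hmap
        have hle : Submodule.span ℂ ((C 0 : D →ₗ[ℂ] Y) '' sD) ≤ W := by
          apply Submodule.span_mono
          rw [show ⇑(C 0 : D →ₗ[ℂ] Y) = ⇑(C 0) from rfl]
          exact Set.subset_union_left
        exact hle hmap
      have h3 : C t (v t) - C 0 (v t) ∈ closure (W : Set Y) := by
        have hmem := ContinuousWithinAt.mem_closure_image
          ((hf_cont t ht).mono hQ0sub) (hQ0dense t ht)
        refine closure_mono ?_ hmem
        intro y hy
        exact Submodule.subset_span (Set.mem_union_right _ hy)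
      have he : C t (v t) = C 0 (v t) + (C t (v t) - C 0 (v t)) := by abel
      rw [he]
      have hmem1 : C 0 (v t) ∈ W.topologicalClosure := by
        rw [← SetLike.mem_coe, Submodule.topologicalClosure_coe]; exact h1
      have hmem2 : C t (v t) - C 0 (v t) ∈ W.topologicalClosure := by
        rw [← SetLike.mem_coe, Submodule.topologicalClosure_coe]; exact h3
      have hsum := Submodule.add_mem _ hmem1 hmem2
      rw [← SetLike.mem_coe, Submodule.topologicalClosure_coe] at hsum
      exact hsum
    -- measurability of t ↦ ‖C t (v t)‖
    have hnorm_meas : AEMeasurable (fun t => ‖C t (v t)‖) (volume.restrict (Set.Ioc 0 τ)) := by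
      obtain ⟨c, hc_count, hc_mem⟩ := hymem
      have hsep : TopologicalSpace.IsSeparable
          (closure ((Submodule.span ℂ c : Submodule ℂ Y) : Set Y)) :=
        (hc_count.isSeparable.span).closure
      obtain ⟨c0, hc0_count, hc0_sub⟩ := hsep
      obtain ⟨z, hz⟩ := (hc0_count.insert (0:Y)).exists_eq_range (Set.insert_nonempty _ _)
      set g : ℕ → ℝ → ℝ := fun k t => if ‖z k‖ = 0 then 0
        else (RCLike.re (inner ℂ (z k) (C t (v t)) : ℂ)) / ‖z k‖ with hg
      have hg_le : ∀ k t, g k t ≤ ‖C t (v t)‖ := by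
        intro k t
        by_cases h0 : ‖z k‖ = 0
        · simp only [hg, if_pos h0]
          exact norm_nonneg _
        · have hzpos : 0 < ‖z k‖ := (norm_nonneg _).lt_of_ne (Ne.symm h0)
          simp only [hg, if_neg h0]
          rw [div_le_iff₀ hzpos]
          calc RCLike.re (inner ℂ (z k) (C t (v t)) : ℂ)
              ≤ ‖(inner ℂ (z k) (C t (v t)) : ℂ)‖ := RCLike.re_le_norm _
            _ ≤ ‖z k‖ * ‖C t (v t)‖ := norm_inner_le_norm _ _
            _ = ‖C t (v t)‖ * ‖z k‖ := mul_comm _ _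
      have hform : ∀ t ∈ Set.Icc (0:ℝ) τ, ‖C t (v t)‖ = ⨆ k, g k t := by
        intro t ht
        have hbdd : BddAbove (Set.range fun k => g k t) :=
          ⟨‖C t (v t)‖, by rintro y ⟨k, rfl⟩; exact hg_le k t⟩
        refine le_antisymm ?_ (ciSup_le fun k => hg_le k t)
        refine le_of_forall_pos_le_add ?_
        intro ε hε
        by_cases hy0 : ‖C t (v t)‖ = 0
        · rw [hy0]
          obtain ⟨k0, hk0⟩ : ∃ k0, z k0 = 0 := by
            have hm : (0:Y) ∈ insert (0:Y) c0 := Set.mem_insert _ _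
            rw [hz] at hm
            obtain ⟨k0, hk0⟩ := hm
            exact ⟨k0, hk0⟩
          have hg0 : g k0 t = 0 := by simp [hg, hk0]
          have h4 := le_ciSup hbdd k0
          rw [hg0] at h4
          linarith
        · have hypos : 0 < ‖C t (v t)‖ := (norm_nonneg _).lt_of_ne (Ne.symm hy0)
          set εm := min (ε/2) (‖C t (v t)‖/2) with hεm
          have hεm_pos : 0 < εm := lt_min (by linarith) (by linarith)
          have hεm_le1 : εm ≤ ε/2 := min_le_left _ _
          have hεm_le2 : εm ≤ ‖C t (v t)‖/2 := min_le_right _ _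
          have hyc : C t (v t) ∈ closure (insert (0:Y) c0) :=
            closure_mono (Set.subset_insert _ _) (hc0_sub (hc_mem t ht))
          obtain ⟨zz, hzz_mem, hzz⟩ := Metric.mem_closure_iff.1 hyc εm hεm_pos
          rw [hz] at hzz_mem
          obtain ⟨k, rfl⟩ := hzz_mem
          rw [dist_eq_norm] at hzz
          have hzk_norm : ‖C t (v t)‖ - εm ≤ ‖z k‖ := by
            have h5 := norm_sub_norm_le (C t (v t)) (z k)
            linarith
          have hzk_pos : 0 < ‖z k‖ := by linarith
          have hzk_ub : ‖z k‖ ≤ ‖C t (v t)‖ + εm := by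
            have h5 : ‖z k‖ - ‖C t (v t)‖ ≤ ‖z k - C t (v t)‖ := norm_sub_norm_le _ _
            rw [norm_sub_rev] at h5
            linarith
          have hre : ‖C t (v t)‖^2 - εm * ‖C t (v t)‖
              ≤ RCLike.re (inner ℂ (z k) (C t (v t)) : ℂ) := by
            have e3 : (inner ℂ (z k) (C t (v t)) : ℂ)
                = inner ℂ (C t (v t)) (C t (v t)) - inner ℂ (C t (v t) - z k) (C t (v t)) := by
              rw [inner_sub_left]; ring
            rw [e3, map_sub]
            have h6 : RCLike.re (inner ℂ (C t (v t)) (C t (v t)) : ℂ) = ‖C t (v t)‖^2 :=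
              inner_self_eq_norm_sq _
            have h7 : RCLike.re (inner ℂ (C t (v t) - z k) (C t (v t)) : ℂ)
                ≤ εm * ‖C t (v t)‖ := by
              calc RCLike.re (inner ℂ (C t (v t) - z k) (C t (v t)) : ℂ)
                  ≤ ‖(inner ℂ (C t (v t) - z k) (C t (v t)) : ℂ)‖ := RCLike.re_le_norm _
                _ ≤ ‖C t (v t) - z k‖ * ‖C t (v t)‖ := norm_inner_le_norm _ _
                _ ≤ εm * ‖C t (v t)‖ :=
                    mul_le_mul_of_nonneg_right hzz.le (norm_nonneg _)
            rw [h6]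
            linarith
          have hfinal : ‖C t (v t)‖ - 2*εm ≤ g k t := by
            have h0 : ‖z k‖ ≠ 0 := ne_of_gt hzk_pos
            simp only [hg, if_neg h0]
            rw [le_div_iff₀ hzk_pos]
            nlinarith
          have h12 := le_ciSup hbdd k
          linarith
      have hg_meas : ∀ k, AEMeasurable (g k) (volume.restrict (Set.Ioc 0 τ)) := by
        intro k
        by_cases h0 : ‖z k‖ = 0
        · simp only [hg, if_pos h0]
          exact aemeasurable_const
        · simp only [hg, if_neg h0]
          have hdec : (fun t => (inner ℂ (z k) (C t (v t)) : ℂ))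
              = fun t => (inner ℂ ((ContinuousLinearMap.adjoint (C 0)) (z k)) (v t) : ℂ)
                + (inner ℂ (z k) (C t (v t) - C 0 (v t)) : ℂ) := by
            funext t
            rw [ContinuousLinearMap.adjoint_inner_left, inner_sub_right]
            ring
          have hm1 := hinner_meas ((ContinuousLinearMap.adjoint (C 0)) (z k))
          have hm2 : AEMeasurable (fun t => (inner ℂ (z k) (C t (v t) - C 0 (v t)) : ℂ))
              (volume.restrict (Set.Ioc 0 τ)) :=
            (continuousOn_const.inner (hf_cont.mono Set.Ioc_subset_Icc_self)).aemeasurable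
              measurableSet_Ioc
          have hsum : AEMeasurable (fun t => (inner ℂ (z k) (C t (v t)) : ℂ))
              (volume.restrict (Set.Ioc 0 τ)) := by
            rw [hdec]; exact hm1.add hm2
          exact (RCLike.measurable_re.comp_aemeasurable hsum).div_const _
      have hFmeas : AEMeasurable (fun t => ⨆ k, g k t) (volume.restrict (Set.Ioc 0 τ)) :=
        AEMeasurable.iSup hg_meas
      refine hFmeas.congr ?_
      refine (MeasureTheory.ae_restrict_iff' measurableSet_Ioc).2 (Filter.Eventually.of_forall ?_)
      intro t ht
      exact (hform t ⟨ht.1.le, ht.2⟩).symm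
    have hφmeas : AEMeasurable φ (volume.restrict (Set.Ioc 0 τ)) := by
      have : φ = fun t => ‖C t (v t)‖^2 := rfl
      rw [this]
      exact (continuous_pow 2).measurable.comp_aemeasurable hnorm_meas
    -- squared Hölder pointwise bounds
    have hsq : ∀ u : ℝ, (|u| ^ α)^2 = |u| ^ (2*α) := by
      intro u
      have h : (|u| ^ α) ^ (2:ℕ) = |u| ^ (α * (2:ℕ)) := by
        rw [← Real.rpow_natCast (|u| ^ α) 2, ← Real.rpow_mul (abs_nonneg u)]
      rw [h]
      norm_num [mul_comm α 2]
    have hpt1 : ∀ t ∈ Set.Icc (0:ℝ) τ, ∀ s ∈ Set.Icc (0:ℝ) τ,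
        ‖C s (v t)‖^2 ≤ 2*(L₀^2*M^2) * |t - s| ^ (2*α) + 2 * φ t := by
      intro t ht s hs
      have h1 : ‖C s (v t)‖ ≤ L₀ * |t - s| ^ α * M + ‖C t (v t)‖ := by
        have h := hHol s hs t ht t ht
        have h2 := norm_sub_norm_le (C s (v t)) (C t (v t))
        rw [abs_sub_comm s t] at h
        linarith
      have ha : (0:ℝ) ≤ L₀ * |t - s| ^ α * M := by positivity
      have hsq' : (L₀ * |t - s| ^ α * M)^2 = L₀^2*M^2 * |t - s| ^ (2*α) := by
        rw [mul_pow, mul_pow, hsq (t - s)]; ring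
      have hφt : φ t = ‖C t (v t)‖^2 := rfl
      rw [hφt]
      nlinarith [h1, sq_nonneg (L₀ * |t - s| ^ α * M - ‖C t (v t)‖), norm_nonneg (C s (v t)),
        norm_nonneg (C t (v t))]
    have hpt2 : ∀ t ∈ Set.Icc (0:ℝ) τ, ∀ s ∈ Set.Icc (0:ℝ) τ,
        φ t ≤ 2*(L₀^2*M^2) * |t - s| ^ (2*α) + 2 * ‖C s (v t)‖^2 := by
      intro t ht s hs
      have h1 : ‖C t (v t)‖ ≤ L₀ * |t - s| ^ α * M + ‖C s (v t)‖ := by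
        have h := hHol t ht s hs t ht
        have h2 := norm_sub_norm_le (C t (v t)) (C s (v t))
        linarith
      have ha : (0:ℝ) ≤ L₀ * |t - s| ^ α * M := by positivity
      have hsq' : (L₀ * |t - s| ^ α * M)^2 = L₀^2*M^2 * |t - s| ^ (2*α) := by
        rw [mul_pow, mul_pow, hsq (t - s)]; ring
      have hφt : φ t = ‖C t (v t)‖^2 := rfl
      rw [hφt]
      nlinarith [h1, sq_nonneg (L₀ * |t - s| ^ α * M - ‖C s (v t)‖), norm_nonneg (C s (v t)),
        norm_nonneg (C t (v t))]
    -- cc facts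
    have hcc_cont : ∀ t : ℝ, Continuous fun s : ℝ => |t - s| ^ (2*α) := by
      intro t
      have hrc : Continuous fun z : ℝ => z ^ (2*α) := continuous_iff_continuousAt.2 fun z =>
        Real.continuousAt_rpow_const z _ (Or.inr (by positivity))
      exact hrc.comp ((continuous_const.sub continuous_id).abs)
    have hcc_le : ∀ t ∈ Set.Icc (0:ℝ) τ, cc t ≤ τ ^ (2*α+1) := by
      intro t ht
      have hcc_t : cc t = ∫ s in (0:ℝ)..τ, |t - s| ^ (2*α) := rfl
      rw [hcc_t]
      have h1 : (∫ s in (0:ℝ)..τ, |t - s| ^ (2*α)) ≤ ∫ _ in (0:ℝ)..τ, τ ^ (2*α) := by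
        refine intervalIntegral.integral_mono_on hτ.le
          ((hcc_cont t).intervalIntegrable 0 τ)
          (intervalIntegrable_const) ?_
        intro s hsI
        refine Real.rpow_le_rpow (abs_nonneg _) ?_ (by positivity)
        rw [abs_sub_le_iff]
        constructor <;> [linarith [ht.2, hsI.1]; linarith [ht.1, hsI.2]]
      rw [intervalIntegral.integral_const, smul_eq_mul, sub_zero] at h1
      calc (∫ s in (0:ℝ)..τ, |t - s| ^ (2*α)) ≤ τ * τ ^ (2*α) := h1
        _ = τ ^ (2*α+1) := by
            rw [Real.rpow_add_one hτ.ne', mul_comm]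
    have hc1 : Continuous fun z : ℝ => z ^ (2*α+1) := continuous_iff_continuousAt.2 fun z =>
      Real.continuousAt_rpow_const z _ (Or.inr (by positivity))
    have hccF : ∀ t ∈ Set.Icc (0:ℝ) τ,
        cc t = (t ^ (2*α+1) + (τ - t) ^ (2*α+1)) / (2*α+1) := by
      intro t ht
      have hcc_t : cc t = ∫ s in (0:ℝ)..τ, |t - s| ^ (2*α) := rfl
      have hI1 : IntervalIntegrable (fun s => |t - s| ^ (2*α)) volume 0 t :=
        (hcc_cont t).intervalIntegrable 0 t
      have hI2 : IntervalIntegrable (fun s => |t - s| ^ (2*α)) volume t τ :=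
        (hcc_cont t).intervalIntegrable t τ
      have hsplit : cc t = (∫ s in (0:ℝ)..t, |t - s| ^ (2*α))
          + ∫ s in t..τ, |t - s| ^ (2*α) := by
        rw [hcc_t, ← intervalIntegral.integral_add_adjacent_intervals hI1 hI2]
      have hfirst : (∫ s in (0:ℝ)..t, |t - s| ^ (2*α)) = t ^ (2*α+1) / (2*α+1) := by
        have he : Set.EqOn (fun s => |t - s| ^ (2*α)) (fun s => (t - s) ^ (2*α))
            (Set.uIcc 0 t) := by
          intro s hsI
          rw [Set.uIcc_of_le ht.1] at hsI
          simp only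
          rw [abs_of_nonneg (by linarith [hsI.2])]
        rw [intervalIntegral.integral_congr he,
          intervalIntegral.integral_comp_sub_left (fun u => u ^ (2*α)) t, sub_self, sub_zero,
          integral_rpow (Or.inl (by linarith : (-1:ℝ) < 2*α)),
          Real.zero_rpow (by positivity : (2*α+1) ≠ 0), sub_zero]
      have hsecond : (∫ s in t..τ, |t - s| ^ (2*α)) = (τ - t) ^ (2*α+1) / (2*α+1) := by
        have he : Set.EqOn (fun s => |t - s| ^ (2*α)) (fun s => (s - t) ^ (2*α))
            (Set.uIcc t τ) := by
          intro s hsI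
          rw [Set.uIcc_of_le ht.2] at hsI
          simp only
          rw [abs_sub_comm, abs_of_nonneg (by linarith [hsI.1])]
        rw [intervalIntegral.integral_congr he,
          intervalIntegral.integral_comp_sub_right (fun u => u ^ (2*α)) t, sub_self,
          integral_rpow (Or.inl (by linarith : (-1:ℝ) < 2*α)),
          Real.zero_rpow (by positivity : (2*α+1) ≠ 0), sub_zero]
      rw [hsplit, hfirst, hsecond]
      ring
    have hFcont : Continuous (fun t : ℝ => (t ^ (2*α+1) + (τ - t) ^ (2*α+1)) / (2*α+1)) := by
      have c2 : Continuous fun t : ℝ => (τ - t) ^ (2*α+1) :=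
        hc1.comp (continuous_const.sub continuous_id)
      exact (hc1.add c2).div_const _
    have hcc_int : IntervalIntegrable cc volume 0 τ := by
      refine (hFcont.intervalIntegrable 0 τ).congr ?_
      have hsub : Set.uIoc (0:ℝ) τ = Set.Ioc 0 τ := Set.uIoc_of_le hτ.le
      intro t ht
      rw [hsub] at ht
      exact (hccF t ⟨ht.1.le, ht.2⟩).symm
    have hcc_val : ∫ t in (0:ℝ)..τ, cc t = τ ^ (2*α+2) / ((2*α+1)*(α+1)) := by
      have he : Set.EqOn cc (fun t => (t ^ (2*α+1) + (τ - t) ^ (2*α+1)) / (2*α+1))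
          (Set.uIcc 0 τ) := by
        intro t htI
        rw [Set.uIcc_of_le hτ.le] at htI
        exact hccF t htI
      rw [intervalIntegral.integral_congr he]
      have c2 : Continuous fun t : ℝ => (τ - t) ^ (2*α+1) :=
        hc1.comp (continuous_const.sub continuous_id)
      have hv1 : (∫ t in (0:ℝ)..τ, t ^ (2*α+1)) = τ ^ (2*α+1+1) / (2*α+1+1) := by
        rw [integral_rpow (Or.inl (by linarith : (-1:ℝ) < 2*α+1)),
          Real.zero_rpow (by positivity : (2*α+1+1) ≠ 0), sub_zero]
      have hv2 : (∫ t in (0:ℝ)..τ, (τ - t) ^ (2*α+1)) = τ ^ (2*α+1+1) / (2*α+1+1) := by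
        rw [intervalIntegral.integral_comp_sub_left (fun u => u ^ (2*α+1)) τ, sub_self, sub_zero,
          integral_rpow (Or.inl (by linarith : (-1:ℝ) < 2*α+1)),
          Real.zero_rpow (by positivity : (2*α+1+1) ≠ 0), sub_zero]
      calc (∫ t in (0:ℝ)..τ, (t ^ (2*α+1) + (τ - t) ^ (2*α+1)) / (2*α+1))
          = (∫ t in (0:ℝ)..τ, (t ^ (2*α+1) + (τ - t) ^ (2*α+1))) / (2*α+1) := by
            rw [intervalIntegral.integral_div]
        _ = (τ ^ (2*α+1+1) / (2*α+1+1) + τ ^ (2*α+1+1) / (2*α+1+1)) / (2*α+1) := by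
            rw [intervalIntegral.integral_add (hc1.intervalIntegrable 0 τ)
              (c2.intervalIntegrable 0 τ), hv1, hv2]
        _ = τ ^ (2*α+2) / ((2*α+1)*(α+1)) := by
            rw [show (2*α+1+1 : ℝ) = 2*α+2 by ring]
            have h1 : (2*α+2 : ℝ) ≠ 0 := by positivity
            have h2 : (2*α+1 : ℝ) ≠ 0 := by positivity
            have h3 : (α+1 : ℝ) ≠ 0 := by positivity
            field_simp
            ring
    -- G bounds
    have hG_le : ∀ t ∈ Set.Icc (0:ℝ) τ, G t ≤ 2*(L₀^2*M^2) * cc t + 2*τ * φ t := by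
      intro t ht
      have hG_t : G t = ∫ s in (0:ℝ)..τ, ‖C s (v t)‖^2 := rfl
      have hint1 : IntervalIntegrable (fun s => ‖C s (v t)‖^2) volume 0 τ := by
        apply ContinuousOn.intervalIntegrable
        rw [Set.uIcc_of_le hτ.le]
        exact ((hcont_Cv (v t)).norm.pow 2)
      have hint2 : IntervalIntegrable
          (fun s => 2*(L₀^2*M^2) * |t - s| ^ (2*α) + 2 * φ t) volume 0 τ :=
        ((continuous_const.mul (hcc_cont t)).add continuous_const).intervalIntegrable 0 τ
      have h := intervalIntegral.integral_mono_on hτ.le hint1 hint2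
        (fun s hsI => hpt1 t ht s hsI)
      rw [hG_t]
      have hval : (∫ s in (0:ℝ)..τ, (2*(L₀^2*M^2) * |t - s| ^ (2*α) + 2 * φ t))
          = 2*(L₀^2*M^2) * cc t + 2*τ * φ t := by
        rw [intervalIntegral.integral_add (((hcc_cont t).intervalIntegrable 0 τ).const_mul _)
          intervalIntegrable_const, intervalIntegral.integral_const_mul,
          intervalIntegral.integral_const, smul_eq_mul, sub_zero]
        have hcc_t : cc t = ∫ s in (0:ℝ)..τ, |t - s| ^ (2*α) := rfl
        rw [← hcc_t]
        ring
      rw [hval] at h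
      exact h
    have hφG : ∀ t ∈ Set.Icc (0:ℝ) τ, τ * φ t ≤ 2*(L₀^2*M^2) * τ ^ (2*α+1) + 2 * G t := by
      intro t ht
      have hint1 : IntervalIntegrable (fun s => ‖C s (v t)‖^2) volume 0 τ := by
        apply ContinuousOn.intervalIntegrable
        rw [Set.uIcc_of_le hτ.le]
        exact ((hcont_Cv (v t)).norm.pow 2)
      have hint2 : IntervalIntegrable
          (fun s => 2*(L₀^2*M^2) * |t - s| ^ (2*α) + 2 * ‖C s (v t)‖^2) volume 0 τ :=
        ((((hcc_cont t).intervalIntegrable 0 τ).const_mul _).add (hint1.const_mul _))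
      have h := intervalIntegral.integral_mono_on hτ.le intervalIntegrable_const hint2
        (fun s hsI => hpt2 t ht s hsI)
      rw [intervalIntegral.integral_const, smul_eq_mul, sub_zero] at h
      have hval : (∫ s in (0:ℝ)..τ, (2*(L₀^2*M^2) * |t - s| ^ (2*α) + 2 * ‖C s (v t)‖^2))
          = 2*(L₀^2*M^2) * cc t + 2 * G t := by
        rw [intervalIntegral.integral_add (((hcc_cont t).intervalIntegrable 0 τ).const_mul _)
          (hint1.const_mul _), intervalIntegral.integral_const_mul,
          intervalIntegral.integral_const_mul]
      rw [hval] at h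
      have hccb := hcc_le t ht
      nlinarith [sq_nonneg (L₀*M)]
    have hφnonneg : ∀ t, 0 ≤ φ t := fun t => sq_nonneg _
    have hφ_int_nonneg : 0 ≤ ∫ t in (0:ℝ)..τ, φ t :=
      intervalIntegral.integral_nonneg hτ.le (fun u _ => hφnonneg u)
    by_cases hGint : IntervalIntegrable G volume 0 τ
    · -- main case
      have hφint : IntervalIntegrable φ volume 0 τ := by
        rw [intervalIntegrable_iff_integrableOn_Ioc_of_le hτ.le]
        have hGon : IntegrableOn G (Set.Ioc 0 τ) volume :=
          (intervalIntegrable_iff_integrableOn_Ioc_of_le hτ.le).1 hGint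
        haveI : IsFiniteMeasure (volume.restrict (Set.Ioc (0:ℝ) τ)) := by
          constructor
          rw [Measure.restrict_apply_univ]
          exact measure_Ioc_lt_top
        have hbound : Integrable
            (fun t => (2*(L₀^2*M^2) * τ ^ (2*α+1) + 2 * G t)/τ)
            (volume.restrict (Set.Ioc 0 τ)) := by
          exact ((integrable_const _).add (hGon.const_mul 2)).div_const τ
        refine Integrable.mono' hbound hφmeas.aestronglyMeasurable ?_
        filter_upwards [MeasureTheory.ae_restrict_mem measurableSet_Ioc] with t ht
        rw [Real.norm_eq_abs, abs_of_nonneg (hφnonneg t)]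
        rw [le_div_iff₀ hτ]
        have := hφG t ⟨ht.1.le, ht.2⟩
        linarith
      have hmain : ∫ t in (0:ℝ)..τ, G t ≤ 2*(L₀^2*M^2) * (∫ t in (0:ℝ)..τ, cc t)
          + 2*τ * ∫ t in (0:ℝ)..τ, φ t := by
        have hRHSint : IntervalIntegrable (fun t => 2*(L₀^2*M^2) * cc t + 2*τ * φ t)
            volume 0 τ := (hcc_int.const_mul _).add (hφint.const_mul _)
        have h := intervalIntegral.integral_mono_on hτ.le hGint hRHSint hG_le
        rwa [intervalIntegral.integral_add (hcc_int.const_mul _) (hφint.const_mul _),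
          intervalIntegral.integral_const_mul, intervalIntegral.integral_const_mul] at h
      have hGd : κ * M^2 ≤ ∫ t in (0:ℝ)..τ, G t := hd
      rw [hcc_val] at hmain
      have h1 : (2 * L₀^2 * τ ^ (2*α + 2) / ((2*α + 1) * (α + 1))) * M^2
          = 2*(L₀^2*M^2) * (τ ^ (2*α+2) / ((2*α+1)*(α+1))) := by ring
      rw [h1]
      linarith
    · -- degenerate case : the double integral is zero
      rw [intervalIntegral.integral_undef hGint] at hd
      have hMzero : M = 0 := by
        have h2 : M^2 ≤ 0 := by nlinarith
        have h3 : M^2 = 0 := le_antisymm h2 (sq_nonneg M)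
        exact pow_eq_zero_iff two_ne_zero |>.mp h3
      rw [hMzero]
      have : (0:ℝ) ≤ 2 * τ * ∫ t in (0:ℝ)..τ, φ t := by positivity
      nlinarith
  refine ⟨key, fun hA => ?_⟩
  refine ⟨(κ - 2 * L₀^2 * τ ^ (2*α + 2) / ((2*α + 1) * (α + 1))) / (2*τ), by
    have h2τ : (0:ℝ) < 2*τ := by linarith
    exact div_pos (by linarith) h2τ, fun x => ?_⟩
  have hk := key x
  have h2τ : (0:ℝ) < 2*τ := by linarith
  rw [ge_iff_le, div_mul_eq_mul_div, div_le_iff₀ h2τ]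
  nlinarith [hk]
end

section
/- (Plancherel step of the averaged Hautus test.) Suppose the second averaged Hautus condition (AH.2) holds with constants m, M > 0: for all ξ ∈ ℝ and x ∈ D, ‖ι x‖²_H ≤ m²·(1/τ)·∫₀^τ ‖C(s)x‖²_Y ds + M²·(1/τ)·∫₀^τ ‖iξ·(ι x) + ι(A(s)x)‖²_H ds. Suppose moreover that for each v ∈ D the maps s ↦ C(s)v ∈ Y and s ↦ A(s)v ∈ H are continuous on [0,τ]. Let h : ℝ → D be continuous with compact support contained in the open interval (0,τ), such that ι ∘ h : ℝ → H is continuously differentiable. Set f(t,s) := (ι ∘ h)'(t) + ι(A(s)(h(t))). Then ∫₀^τ ‖ι(h(t))‖²_H dt ≤ (m²/τ)·∫₀^τ∫₀^τ ‖C(s)(h(t))‖²_Y dt ds + (M²/τ)·∫₀^τ∫₀^τ ‖f(t,s)‖²_H dt ds. -/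
open MeasureTheory Complex Set Filter Topology AddCircle
open scoped Real ComplexConjugate ENNReal

noncomputable section AuxHautusSection

namespace AuxHautus

/-- An orthonormal family in a separable inner product space is countable. -/
lemma orthonormal_countable {E : Type*} [NormedAddCommGroup E] [InnerProductSpace ℂ E]
    [TopologicalSpace.SeparableSpace E] {ι : Type*} {b : ι → E}
    (hb : Orthonormal ℂ b) : Countable ι := by
  obtain ⟨s, hsc, hsd⟩ := TopologicalSpace.exists_countable_dense E
  haveI := hsc.to_subtype
  have hdist : ∀ i j : ι, i ≠ j → (1.4 : ℝ) ≤ dist (b i) (b j) := by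
    intro i j hij
    have h2 : dist (b i) (b j) ^ 2 = 2 := by
      rw [dist_eq_norm, @norm_sub_sq ℂ]
      simp [hb.2 hij, hb.1 i, hb.1 j]
      norm_num
    nlinarith [dist_nonneg (x := b i) (y := b j)]
  have hchoice : ∀ i : ι, ∃ y : s, dist (b i) (y : E) < 0.7 := by
    intro i
    obtain ⟨y, hy, hlt⟩ := hsd.exists_dist_lt (b i) (by norm_num : (0:ℝ) < 0.7)
    exact ⟨⟨y, hy⟩, hlt⟩
  choose f hf using hchoice
  have hinj : Function.Injective f := by
    intro i j hfij
    by_contra hij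
    have h1 := hf i
    have h2 := hf j
    have h3 := hdist i j hij
    have h4 : dist (b i) (b j) ≤ dist (b i) (f i : E) + dist (f i : E) (b j) :=
      dist_triangle _ _ _
    rw [hfij] at h1 h4
    rw [dist_comm] at h2
    linarith
  exact hinj.countable

variable {E F : Type*}

/-- The `n`-th Fourier coefficient of `u` on `[0, τ]`. -/
def fc (τ : ℝ) [NormedAddCommGroup E] [NormedSpace ℂ E] (u : ℝ → E) (n : ℤ) : E :=
  (1/τ : ℝ) • ∫ x in (0:ℝ)..τ, fourier (-n) (x : AddCircle τ) • u x

section Basic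

variable [NormedAddCommGroup E] [NormedSpace ℂ E] [CompleteSpace E]
variable [NormedAddCommGroup F] [NormedSpace ℂ F] [CompleteSpace F]
variable {τ : ℝ} [hT : Fact (0 < τ)]

omit [CompleteSpace E] hT in
lemma cont_fourier_smul {u : ℝ → E} (hu : Continuous u) (n : ℤ) :
    Continuous fun x : ℝ => fourier (-n) (x : AddCircle τ) • u x :=
  (((fourier (-n)).continuous).comp (AddCircle.continuous_mk' τ)).smul hu

lemma fc_eq_fourierCoeff {E : Type} [NormedAddCommGroup E] [NormedSpace ℂ E] [CompleteSpace E]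
    (u : ℝ → E) (n : ℤ) :
    fourierCoeff (AddCircle.liftIco τ 0 u) n = fc τ u n := by
  unfold fc
  rw [fourierCoeff_eq_intervalIntegral _ n 0, zero_add]
  congr 1
  simp_rw [intervalIntegral.integral_of_le hT.out.le]
  iterate 2 rw [integral_Ioc_eq_integral_Ioo]
  refine setIntegral_congr_fun measurableSet_Ioo fun x hx => ?_
  rw [AddCircle.liftIco_zero_coe_apply (Ioo_subset_Ico_self hx)]

omit hT in
lemma fc_clm_comm (T : E →L[ℂ] F) {u : ℝ → E} (hu : Continuous u) (n : ℤ) :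
    fc τ (fun t => T (u t)) n = T (fc τ u n) := by
  unfold fc
  rw [T.map_smul_of_tower, ← T.intervalIntegral_comp_comm
    ((cont_fourier_smul hu n).intervalIntegrable _ _)]
  simp [_root_.map_smul]

omit [CompleteSpace E] hT in
lemma fc_add {u v : ℝ → E} (hu : Continuous u) (hv : Continuous v) (n : ℤ) :
    fc τ (fun t => u t + v t) n = fc τ u n + fc τ v n := by
  unfold fc
  rw [← smul_add, ← intervalIntegral.integral_add
    ((cont_fourier_smul hu n).intervalIntegrable _ _)
    ((cont_fourier_smul hv n).intervalIntegrable _ _)]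
  simp [smul_add]

end Basic

section Hilbert

lemma hilbert_parseval {E : Type*} [NormedAddCommGroup E] [InnerProductSpace ℂ E]
    [CompleteSpace E] {ι : Type*} (b : HilbertBasis ι ℂ E) (x : E) :
    HasSum (fun i => ‖(inner ℂ (b i) x : ℂ)‖ ^ 2) (‖x‖ ^ 2) := by
  have h := (b.hasSum_inner_mul_inner x x).mapL Complex.reCLM
  have h1 : (fun i => Complex.reCLM ((inner ℂ x (b i) : ℂ) * (inner ℂ (b i) x : ℂ)))
      = fun i => ‖(inner ℂ (b i) x : ℂ)‖ ^ 2 := by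
    funext i
    rw [show (inner ℂ x (b i) : ℂ) = conj (inner ℂ (b i) x : ℂ) from (inner_conj_symm _ _).symm,
      mul_comm, Complex.mul_conj]
    simp [Complex.normSq_eq_norm_sq, ← Complex.ofReal_pow, Complex.ofReal_re]
  have h2 : Complex.reCLM (inner ℂ x x : ℂ) = ‖x‖ ^ 2 := by
    simpa using (@inner_self_eq_norm_sq ℂ _ _ _ _ x)
  rw [show (fun i => Complex.reCLM ((inner ℂ x (b i) : ℂ) * (inner ℂ (b i) x : ℂ))) = _ from h1] at h
  rwa [h2] at h

lemma summable_fourierCoeff_sq {τ : ℝ} [hT : Fact (0 < τ)]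
    (f : Lp ℂ 2 (@haarAddCircle τ hT)) :
    Summable fun n : ℤ => ‖fourierCoeff (f : AddCircle τ → ℂ) n‖ ^ 2 := by
  simp_rw [← fourierBasis_repr]
  have hm : Memℓp (fourierBasis.repr f) 2 := lp.memℓp _
  have := hm.summable (by norm_num : 0 < (2 : ℝ≥0∞).toReal)
  simpa using this

lemma integrable_circle {τ : ℝ} [hT : Fact (0 < τ)] {E : Type*} [NormedAddCommGroup E]
    {f : AddCircle τ → E} (hf : Continuous f) :
    Integrable f (@haarAddCircle τ hT) :=
  hf.integrable_of_hasCompactSupport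
    (IsCompact.of_isClosed_subset isCompact_univ (isClosed_tsupport f) (Set.subset_univ _))

end Hilbert

section Parseval

variable {E : Type*} [NormedAddCommGroup E] [InnerProductSpace ℂ E] [CompleteSpace E]
variable {τ : ℝ} [hT : Fact (0 < τ)]

lemma intervalIntegral_liftIco_norm_sq {u : ℝ → E} :
    ∫ t in (0:ℝ)..τ, ‖AddCircle.liftIco τ 0 u (t : AddCircle τ)‖ ^ 2
      = ∫ t in (0:ℝ)..τ, ‖u t‖ ^ 2 := by
  simp_rw [intervalIntegral.integral_of_le hT.out.le]
  iterate 2 rw [integral_Ioc_eq_integral_Ioo]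
  refine setIntegral_congr_fun measurableSet_Ioo fun x hx => ?_
  rw [AddCircle.liftIco_zero_coe_apply (Ioo_subset_Ico_self hx)]

lemma circle_integral_eq (u : ℝ → E) :
    ∫ z, ‖AddCircle.liftIco τ 0 u z‖ ^ 2 ∂(@haarAddCircle τ hT)
      = (1/τ) * ∫ t in (0:ℝ)..τ, ‖u t‖ ^ 2 := by
  have h1 := AddCircle.intervalIntegral_preimage τ 0
    (fun z => ‖AddCircle.liftIco τ 0 u z‖ ^ 2)
  rw [zero_add, intervalIntegral_liftIco_norm_sq] at h1
  have h2 : (volume : Measure (AddCircle τ)) = (ENNReal.ofReal τ) • haarAddCircle :=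
    volume_eq_smul_haarAddCircle
  have h3 : ∫ (b : AddCircle τ), ‖AddCircle.liftIco τ 0 u b‖ ^ 2
      = τ * ∫ z, ‖AddCircle.liftIco τ 0 u z‖ ^ 2 ∂haarAddCircle := by
    rw [h2, integral_smul_measure, ENNReal.toReal_ofReal hT.out.le, smul_eq_mul]
  rw [h1, h3]
  have : τ ≠ 0 := hT.out.ne'
  field_simp

lemma parseval_sep [TopologicalSpace.SeparableSpace E]
    {u : ℝ → E} (hu : Continuous u) (hend : u 0 = u τ) :
    HasSum (fun n : ℤ => ‖fc τ u n‖ ^ 2) ((1/τ) * ∫ t in (0:ℝ)..τ, ‖u t‖ ^ 2) := by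
  obtain ⟨w, b, hb⟩ := exists_hilbertBasis ℂ E
  haveI : Countable w := orthonormal_countable b.orthonormal
  set uc : AddCircle τ → E := AddCircle.liftIco τ 0 u with huc_def
  have huc : Continuous uc := AddCircle.liftIco_zero_continuous hend hu.continuousOn
  set φ : w → AddCircle τ → ℂ :=
    fun i => AddCircle.liftIco τ 0 (fun t => inner ℂ (b i) (u t)) with hφ_def
  have hφ_eq : ∀ (i : w) z, φ i z = (inner ℂ (b i) (uc z) : ℂ) := fun i z => rfl
  have hφ_cont : ∀ i, Continuous (φ i) := by
    intro i
    refine AddCircle.liftIco_zero_continuous (by rw [hend]) ?_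
    exact (Continuous.inner continuous_const hu).continuousOn
  have hcoeff : ∀ (i : w) (n : ℤ), fourierCoeff (φ i) n = (inner ℂ (b i) (fc τ u n) : ℂ) := by
    intro i n
    rw [hφ_def]
    rw [fc_eq_fourierCoeff]
    have hcomm := fc_clm_comm (τ := τ) (innerSL ℂ (b i : E)) hu n
    simpa using hcomm
  set S : w → ℝ := fun i => ∫ z, ‖φ i z‖ ^ 2 ∂haarAddCircle with hS_def
  set a : w → ℤ → ℝ := fun i n => ‖(inner ℂ (b i) (fc τ u n) : ℂ)‖ ^ 2 with ha_def
  have ha_nonneg : ∀ i n, 0 ≤ a i n := fun i n => by positivity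
  -- per-i scalar Parseval
  have hA1 : ∀ i : w, HasSum (a i) (S i) := by
    intro i
    set Li : Lp ℂ 2 (@haarAddCircle τ hT) :=
      ContinuousMap.toLp (E := ℂ) 2 haarAddCircle ℂ ⟨φ i, hφ_cont i⟩ with hLi
    have hae : (Li : AddCircle τ → ℂ) =ᵐ[haarAddCircle] φ i :=
      ContinuousMap.coeFn_toLp (p := 2) (μ := @haarAddCircle τ hT) (𝕜 := ℂ) ⟨φ i, hφ_cont i⟩
    have hc_eq : ∀ n, fourierCoeff (Li : AddCircle τ → ℂ) n = fourierCoeff (φ i) n := by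
      intro n
      unfold fourierCoeff
      exact integral_congr_ae (hae.mono fun z hz => by simp [hz])
    have hi_eq : ∫ z, ‖(Li : AddCircle τ → ℂ) z‖ ^ 2 ∂haarAddCircle = S i :=
      integral_congr_ae (hae.mono fun z hz => by simp [hz])
    have hsq := tsum_sq_fourierCoeff Li
    have hsm := summable_fourierCoeff_sq Li
    simp_rw [hc_eq, hcoeff i] at hsq hsm
    rw [hi_eq] at hsq
    exact (Summable.hasSum_iff hsm).mpr hsq
  -- HasSum of S to the integral
  have hS_nonneg : ∀ i, 0 ≤ S i := fun i => integral_nonneg (fun z => by positivity)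
  have hφ_int : ∀ i : w, Integrable (fun z => ‖φ i z‖ ^ 2) (@haarAddCircle τ hT) :=
    fun i => integrable_circle (((hφ_cont i).norm).pow 2)
  have huc_int : Integrable (fun z => ‖uc z‖ ^ 2) (@haarAddCircle τ hT) :=
    integrable_circle ((huc.norm).pow 2)
  have hpoint : ∀ z, HasSum (fun i : w => ‖φ i z‖ ^ 2) (‖uc z‖ ^ 2) := by
    intro z
    have := hilbert_parseval b (uc z)
    simpa [hφ_eq] using this
  have hpart : ∀ Fs : Finset w, ∑ i ∈ Fs, S i ≤ ∫ z, ‖uc z‖ ^ 2 ∂haarAddCircle := by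
    intro Fs
    rw [hS_def, ← integral_finset_sum _ (fun i _ => hφ_int i)]
    refine integral_mono (integrable_finset_sum _ (fun i _ => hφ_int i)) huc_int ?_
    intro z
    exact sum_le_hasSum Fs (fun i _ => by positivity) (hpoint z)
  have hS_sum : Summable S := summable_of_sum_le hS_nonneg hpart
  have hlint : ∀ i : w, ∫⁻ z, ‖‖φ i z‖ ^ 2‖ₑ ∂(@haarAddCircle τ hT) = ENNReal.ofReal (S i) := by
    intro i
    rw [hS_def]
    rw [ofReal_integral_eq_lintegral_ofReal (hφ_int i) (ae_of_all _ fun z => by positivity)]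
    congr 1
    funext z
    rw [← Real.enorm_eq_ofReal (by positivity)]
  have hswap : ∫ z, (∑' i : w, ‖φ i z‖ ^ 2) ∂(@haarAddCircle τ hT) = ∑' i : w, S i := by
    refine integral_tsum (fun i => (((hφ_cont i).norm).pow 2).aestronglyMeasurable) ?_
    simp_rw [hlint]
    rw [← ENNReal.ofReal_tsum_of_nonneg hS_nonneg hS_sum]
    exact ENNReal.ofReal_ne_top
  have hval : ∑' i : w, S i = ∫ z, ‖uc z‖ ^ 2 ∂haarAddCircle := by
    rw [← hswap]
    congr 1
    funext z
    exact (hpoint z).tsum_eq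
  -- double sum manipulations
  have hf_unc : Summable (Function.uncurry a) := by
    refine (summable_prod_of_nonneg (fun p => ha_nonneg p.1 p.2)).mpr ⟨fun i => (hA1 i).summable, ?_⟩
    have : (fun i => ∑' n, a i n) = S := funext fun i => (hA1 i).tsum_eq
    rw [this]; exact hS_sum
  have hsum_n : ∀ n, HasSum (fun i : w => a i n) (‖fc τ u n‖ ^ 2) := fun n =>
    hilbert_parseval b (fc τ u n)
  have hswap2 : ∑' n, ∑' i : w, a i n = ∑' i : w, ∑' n, a i n :=
    Summable.tsum_comm' hf_unc (fun i => (hA1 i).summable) (fun n => (hsum_n n).summable)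
  have hsum_target : Summable (fun n : ℤ => ‖fc τ u n‖ ^ 2) := by
    have hswapped : Summable (Function.uncurry a ∘ (Equiv.prodComm ℤ w)) :=
      (Equiv.summable_iff _).mpr hf_unc
    have h2 := (summable_prod_of_nonneg (fun p : ℤ × w => ha_nonneg p.2 p.1)).mp hswapped
    have h3 := h2.2
    refine h3.congr fun n => ?_
    exact (hsum_n n).tsum_eq
  have htsum_target : ∑' n, ‖fc τ u n‖ ^ 2 = (1/τ) * ∫ t in (0:ℝ)..τ, ‖u t‖ ^ 2 := by
    calc ∑' n, ‖fc τ u n‖ ^ 2 = ∑' n, ∑' i : w, a i n := by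
          refine tsum_congr fun n => ?_
          exact (hsum_n n).tsum_eq.symm
      _ = ∑' i : w, ∑' n, a i n := hswap2
      _ = ∑' i : w, S i := by
          refine tsum_congr fun i => ?_
          exact (hA1 i).tsum_eq
      _ = ∫ z, ‖uc z‖ ^ 2 ∂haarAddCircle := hval
      _ = (1/τ) * ∫ t in (0:ℝ)..τ, ‖u t‖ ^ 2 := circle_integral_eq u
  exact (Summable.hasSum_iff hsum_target).mpr htsum_target

end Parseval

section ParsevalGen

variable {E : Type*} [NormedAddCommGroup E] [InnerProductSpace ℂ E] [CompleteSpace E]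
variable {τ : ℝ} [hT : Fact (0 < τ)]

/-- Parseval for continuous periodic vector-valued functions. -/
lemma parseval {u : ℝ → E} (hu : Continuous u) (hend : u 0 = u τ) :
    HasSum (fun n : ℤ => ‖fc τ u n‖ ^ 2) ((1/τ) * ∫ t in (0:ℝ)..τ, ‖u t‖ ^ 2) := by
  set K : Submodule ℂ E := (Submodule.span ℂ (Set.range u)).topologicalClosure with hK
  haveI : CompleteSpace K := (Submodule.isClosed_topologicalClosure _).completeSpace_coe
  have hsep : TopologicalSpace.IsSeparable (K : Set E) := by
    rw [hK, Submodule.topologicalClosure_coe]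
    exact ((TopologicalSpace.isSeparable_range hu).span).closure
  haveI : TopologicalSpace.SeparableSpace K := hsep.separableSpace
  have hmem : ∀ t, u t ∈ K :=
    fun t => Submodule.le_topologicalClosure _ (Submodule.subset_span ⟨t, rfl⟩)
  set v : ℝ → K := fun t => ⟨u t, hmem t⟩ with hv_def
  have hv : Continuous v := hu.subtype_mk hmem
  have hvend : v 0 = v τ := Subtype.ext hend
  have hP := parseval_sep hv hvend
  have h1 : ∀ n, fc τ u n = K.subtypeL (fc τ v n) := by
    intro n
    rw [← fc_clm_comm K.subtypeL hv n]
    rfl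
  have h2 : (fun n : ℤ => ‖fc τ v n‖ ^ 2) = fun n : ℤ => ‖fc τ u n‖ ^ 2 := by
    funext n
    rw [h1 n]
    rfl
  have h3 : (∫ t in (0:ℝ)..τ, ‖v t‖ ^ 2) = ∫ t in (0:ℝ)..τ, ‖u t‖ ^ 2 := by
    refine intervalIntegral.integral_congr fun t _ => ?_
    rfl
  rw [h2, h3] at hP
  exact hP

/-- Coefficients of the derivative. -/
lemma fc_deriv {g g' : ℝ → E} (hg : ∀ t, HasDerivAt g (g' t) t) (hg' : Continuous g')
    (h0 : g 0 = 0) (hτ0 : g τ = 0) (n : ℤ) :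
    fc τ g' n = ((2 * Real.pi * I * n) / τ) • fc τ g n := by
  have hgc : Continuous g := by
    rw [continuous_iff_continuousAt]
    exact fun t => (hg t).continuousAt
  set c : ℂ := -2 * Real.pi * I * n / τ with hc
  have hcF : Continuous fun t : ℝ => (fourier (-n) (t : AddCircle τ) : ℂ) :=
    ((fourier (-n)).continuous).comp (AddCircle.continuous_mk' τ)
  have hF : ∀ t : ℝ, HasDerivAt (fun s : ℝ => fourier (-n) (s : AddCircle τ) • g s)
      (fourier (-n) (t : AddCircle τ) • g' t + (c * fourier (-n) (t : AddCircle τ)) • g t) t := by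
    intro t
    have h1 := hasDerivAt_fourier_neg τ n t
    have h2 := h1.smul (hg t)
    have : -2 * Real.pi * I * (n : ℂ) / τ * fourier (-n) (t : AddCircle τ)
        = c * fourier (-n) (t : AddCircle τ) := by rw [hc]
    rw [this] at h2
    exact h2
  have i1 : IntervalIntegrable (fun t : ℝ => fourier (-n) (t : AddCircle τ) • g' t) volume 0 τ :=
    (hcF.smul hg').intervalIntegrable 0 τ
  have i2 : IntervalIntegrable (fun t : ℝ => (c * fourier (-n) (t : AddCircle τ)) • g t) volume 0 τ :=
    ((continuous_const.mul hcF).smul hgc).intervalIntegrable 0 τ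
  have hkey := intervalIntegral.integral_eq_sub_of_hasDerivAt
    (fun t (_ : t ∈ Set.uIcc (0:ℝ) τ) => hF t) ((i1.add i2))
  rw [hτ0, h0, smul_zero, smul_zero, sub_zero] at hkey
  rw [intervalIntegral.integral_add i1 i2] at hkey
  have hmul : (∫ t in (0:ℝ)..τ, (c * fourier (-n) (t : AddCircle τ)) • g t)
      = c • ∫ t in (0:ℝ)..τ, fourier (-n) (t : AddCircle τ) • g t := by
    rw [← intervalIntegral.integral_smul]
    congr 1
    funext t
    rw [mul_smul]
  rw [hmul] at hkey
  have hint : (∫ t in (0:ℝ)..τ, fourier (-n) (t : AddCircle τ) • g' t)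
      = (-c) • ∫ t in (0:ℝ)..τ, fourier (-n) (t : AddCircle τ) • g t := by
    rw [eq_neg_of_add_eq_zero_left hkey, neg_smul]
  unfold fc
  rw [hint, smul_comm]
  congr 1
  rw [hc]
  push_cast
  ring


end ParsevalGen

end AuxHautus

end AuxHautusSection

open AuxHautus

/-- Plancherel step of the averaged Hautus test.

Suppose the second averaged Hautus condition (AH.2) holds with constants
`m, M > 0`, and for each `v ∈ D` the maps `s ↦ C(s)v` and `s ↦ A(s)v` are
continuous on `[0,τ]`.  Let `h : ℝ → D` be continuous with compact support
contained in `(0,τ)` such that `ι ∘ h` is continuously differentiable with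
derivative `h'`.  With `f(t,s) := (ι ∘ h)'(t) + A(s)(h(t))` one has
`∫₀^τ ‖ι(h(t))‖² dt ≤ (m²/τ)·∫₀^τ∫₀^τ ‖C(s)(h(t))‖² dt ds
                    + (M²/τ)·∫₀^τ∫₀^τ ‖f(t,s)‖² dt ds`. -/
theorem averaged_hautus_plancherel_step
    {H Y D : Type*}
    [NormedAddCommGroup H] [InnerProductSpace ℂ H] [CompleteSpace H]
    [NormedAddCommGroup Y] [InnerProductSpace ℂ Y] [CompleteSpace Y]
    [NormedAddCommGroup D] [InnerProductSpace ℂ D] [CompleteSpace D]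
    (τ : ℝ) (hτ : 0 < τ)
    (ι : D →L[ℂ] H) (hι_inj : Function.Injective ι) (hι_dense : DenseRange ι)
    (A : ℝ → D →L[ℂ] H) (C : ℝ → D →L[ℂ] Y)
    (m M : ℝ) (hm : 0 < m) (hM : 0 < M)
    -- the second averaged Hautus condition (AH.2)
    (hAH2 : ∀ (ξ : ℝ) (x : D),
      ‖ι x‖^2 ≤ m^2 * ((1/τ) * ∫ s in (0:ℝ)..τ, ‖C s x‖^2)
        + M^2 * ((1/τ) * ∫ s in (0:ℝ)..τ, ‖(Complex.I * (ξ:ℂ)) • (ι x) + A s x‖^2))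
    -- continuity of s ↦ C(s)v and s ↦ A(s)v on [0,τ]
    (hCcont : ∀ v : D, ContinuousOn (fun s => C s v) (Set.Icc (0:ℝ) τ))
    (hAcont : ∀ v : D, ContinuousOn (fun s => A s v) (Set.Icc (0:ℝ) τ))
    -- h : ℝ → D continuous with compact support contained in (0,τ)
    (h : ℝ → D) (hh_cont : Continuous h) (hh_supp : HasCompactSupport h)
    (hh_in : tsupport h ⊆ Set.Ioo (0:ℝ) τ)
    -- ι ∘ h is continuously differentiable with derivative h'
    (h' : ℝ → H) (hh'_cont : Continuous h')
    (hh'_deriv : ∀ t : ℝ, HasDerivAt (fun r => ι (h r)) (h' t) t) :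
    ∫ t in (0:ℝ)..τ, ‖ι (h t)‖^2 ≤
      (m^2 / τ) * (∫ s in (0:ℝ)..τ, ∫ t in (0:ℝ)..τ, ‖C s (h t)‖^2)
        + (M^2 / τ) * (∫ s in (0:ℝ)..τ, ∫ t in (0:ℝ)..τ, ‖h' t + A s (h t)‖^2) := by
  haveI : Fact (0 < τ) := ⟨hτ⟩
  classical
  -- endpoint values of h
  have h_h0 : h 0 = 0 :=
    image_eq_zero_of_notMem_tsupport (fun hc => lt_irrefl (0:ℝ) (hh_in hc).1)
  have h_hτ : h τ = 0 :=
    image_eq_zero_of_notMem_tsupport (fun hc => lt_irrefl τ (hh_in hc).2)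
  have hg_cont : Continuous (fun t => ι (h t)) := ι.continuous.comp hh_cont
  have hg0 : ι (h 0) = 0 := by rw [h_h0, map_zero]
  have hgτ : ι (h τ) = 0 := by rw [h_hτ, map_zero]
  -- h' vanishes outside the support of h
  have h'_zero : ∀ t₀ : ℝ, t₀ ∉ tsupport h → h' t₀ = 0 := by
    intro t₀ ht₀
    have hopen : IsOpen (tsupport h)ᶜ := (isClosed_tsupport h).isOpen_compl
    have hev : (fun _ : ℝ => (0:H)) =ᶠ[nhds t₀] (fun r => ι (h r)) := by
      filter_upwards [hopen.mem_nhds ht₀] with x hx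
      rw [image_eq_zero_of_notMem_tsupport hx, map_zero]
    have hd0 : HasDerivAt (fun _ : ℝ => (0:H)) (h' t₀) t₀ :=
      (hh'_deriv t₀).congr_of_eventuallyEq hev
    exact (hd0.unique (hasDerivAt_const t₀ 0))
  have h'0 : h' 0 = 0 := h'_zero 0 (fun hc => lt_irrefl (0:ℝ) (hh_in hc).1)
  have h'τ : h' τ = 0 := h'_zero τ (fun hc => lt_irrefl τ (hh_in hc).2)
  -- uniform bounds on the operator families
  have hCbd : ∃ R : ℝ, ∀ s ∈ Icc (0:ℝ) τ, ‖C s‖ ≤ R := by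
    obtain ⟨R, hR⟩ := banach_steinhaus (g := fun s : Icc (0:ℝ) τ => C s.1) (fun v => by
      obtain ⟨Cv, hCv⟩ := (isCompact_Icc).exists_bound_of_continuousOn (hCcont v)
      exact ⟨Cv, fun i => hCv i.1 i.2⟩)
    exact ⟨R, fun s hs => hR ⟨s, hs⟩⟩
  have hAbd : ∃ R : ℝ, ∀ s ∈ Icc (0:ℝ) τ, ‖A s‖ ≤ R := by
    obtain ⟨R, hR⟩ := banach_steinhaus (g := fun s : Icc (0:ℝ) τ => A s.1) (fun v => by
      obtain ⟨Cv, hCv⟩ := (isCompact_Icc).exists_bound_of_continuousOn (hAcont v)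
      exact ⟨Cv, fun i => hCv i.1 i.2⟩)
    exact ⟨R, fun s hs => hR ⟨s, hs⟩⟩
  obtain ⟨RC, hRC⟩ := hCbd
  obtain ⟨RA, hRA⟩ := hAbd
  -- continuity in s of the inner integrals
  have contC : ContinuousOn (fun s => ∫ t in (0:ℝ)..τ, ‖C s (h t)‖^2) (Icc (0:ℝ) τ) := by
    intro s₀ hs₀
    apply intervalIntegral.tendsto_integral_filter_of_dominated_convergence
      (bound := fun t => (RC * ‖h t‖ + 1)^2)
    · exact Eventually.of_forall fun s =>
        (((C s).continuous.comp hh_cont).norm.pow 2).aestronglyMeasurable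
    · filter_upwards [self_mem_nhdsWithin] with s hs
      refine ae_of_all _ fun t _ => ?_
      have h1 : ‖C s (h t)‖ ≤ RC * ‖h t‖ + 1 := by
        have := (C s).le_opNorm (h t)
        nlinarith [hRC s hs, norm_nonneg (h t), norm_nonneg (C s)]
      rw [Real.norm_eq_abs, _root_.abs_of_nonneg (by positivity)]
      exact pow_le_pow_left₀ (norm_nonneg _) h1 2
    · exact (((continuous_const.mul hh_cont.norm).add continuous_const).pow 2).intervalIntegrable 0 τ
    · refine ae_of_all _ fun t _ => ?_
      exact ((hCcont (h t) s₀ hs₀).norm.pow 2)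
  have contA : ContinuousOn (fun s => ∫ t in (0:ℝ)..τ, ‖h' t + A s (h t)‖^2) (Icc (0:ℝ) τ) := by
    intro s₀ hs₀
    apply intervalIntegral.tendsto_integral_filter_of_dominated_convergence
      (bound := fun t => (‖h' t‖ + (RA * ‖h t‖ + 1))^2)
    · exact Eventually.of_forall fun s =>
        ((hh'_cont.add ((A s).continuous.comp hh_cont)).norm.pow 2).aestronglyMeasurable
    · filter_upwards [self_mem_nhdsWithin] with s hs
      refine ae_of_all _ fun t _ => ?_
      have h1 : ‖h' t + A s (h t)‖ ≤ ‖h' t‖ + (RA * ‖h t‖ + 1) := by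
        have h2 := (A s).le_opNorm (h t)
        have h3 := norm_add_le (h' t) (A s (h t))
        nlinarith [hRA s hs, norm_nonneg (h t), norm_nonneg (A s)]
      rw [Real.norm_eq_abs, _root_.abs_of_nonneg (by positivity)]
      exact pow_le_pow_left₀ (norm_nonneg _) h1 2
    · exact ((hh'_cont.norm.add ((continuous_const.mul hh_cont.norm).add continuous_const)).pow 2).intervalIntegrable 0 τ
    · refine ae_of_all _ fun t _ => ?_
      exact ((Filter.Tendsto.const_add _ ((hAcont (h t) s₀ hs₀))).norm.pow 2)
  -- Parseval for g = ι ∘ h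
  have hPg := parseval (τ := τ) (u := fun t => ι (h t)) hg_cont (show ι (h 0) = ι (h τ) by rw [hg0, hgτ])
  -- Parseval for C s ∘ h
  have hPC : ∀ s ∈ Icc (0:ℝ) τ, HasSum (fun n : ℤ => ‖C s (fc τ h n)‖^2)
      ((1/τ) * ∫ t in (0:ℝ)..τ, ‖C s (h t)‖^2) := by
    intro s _
    have hP := parseval (τ := τ) (u := fun t => C s (h t)) ((C s).continuous.comp hh_cont)
      (show C s (h 0) = C s (h τ) by rw [h_h0, h_hτ])
    have he : (fun n : ℤ => ‖fc τ (fun t => C s (h t)) n‖^2)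
        = fun n : ℤ => ‖C s (fc τ h n)‖^2 := by
      funext n; rw [fc_clm_comm (C s) hh_cont n]
    rwa [he] at hP
  -- Parseval for h' + A s ∘ h
  have hPA : ∀ s ∈ Icc (0:ℝ) τ, HasSum (fun n : ℤ => ‖fc τ h' n + A s (fc τ h n)‖^2)
      ((1/τ) * ∫ t in (0:ℝ)..τ, ‖h' t + A s (h t)‖^2) := by
    intro s _
    have hP := parseval (τ := τ) (u := fun t => h' t + A s (h t)) (hh'_cont.add ((A s).continuous.comp hh_cont))
      (show h' 0 + A s (h 0) = h' τ + A s (h τ) by rw [h'0, h'τ, h_h0, h_hτ])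
    have he : (fun n : ℤ => ‖fc τ (fun t => h' t + A s (h t)) n‖^2)
        = fun n : ℤ => ‖fc τ h' n + A s (fc τ h n)‖^2 := by
      funext n
      rw [fc_add (v := fun t => A s (h t)) hh'_cont ((A s).continuous.comp hh_cont) n,
        fc_clm_comm (A s) hh_cont n]
    rwa [he] at hP
  -- coefficients of the derivative
  have hfcg : ∀ n : ℤ, fc τ (fun t => ι (h t)) n = ι (fc τ h n) :=
    fun n => fc_clm_comm ι hh_cont n
  have hfc' : ∀ n : ℤ, fc τ h' n = ((2 * Real.pi * I * n) / τ) • fc τ (fun t => ι (h t)) n :=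
    fun n => fc_deriv hh'_deriv hh'_cont hg0 hgτ n
  -- pointwise (in n) application of (AH.2)
  have hn : ∀ n : ℤ, ‖fc τ (fun t => ι (h t)) n‖^2
      ≤ m^2 * ((1/τ) * ∫ s in (0:ℝ)..τ, ‖C s (fc τ h n)‖^2)
        + M^2 * ((1/τ) * ∫ s in (0:ℝ)..τ, ‖fc τ h' n + A s (fc τ h n)‖^2) := by
    intro n
    have h2 := hAH2 (2 * Real.pi * n / τ) (fc τ h n)
    rw [← hfcg n] at h2
    have hIξ : (Complex.I * ((2 * Real.pi * n / τ : ℝ) : ℂ)) • fc τ (fun t => ι (h t)) n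
        = fc τ h' n := by
      rw [hfc' n]
      congr 1
      push_cast
      ring
    rw [show (fun s => ‖(Complex.I * ((2 * Real.pi * n / τ : ℝ) : ℂ)) • fc τ (fun t => ι (h t)) n
          + A s (fc τ h n)‖^2)
        = fun s => ‖fc τ h' n + A s (fc τ h n)‖^2 by funext s; rw [hIξ]] at h2
    exact h2
  -- integrability in s of coefficient integrands
  have intC : ∀ n : ℤ, IntervalIntegrable (fun s => ‖C s (fc τ h n)‖^2) volume 0 τ := by
    intro n
    apply ContinuousOn.intervalIntegrable
    rw [uIcc_of_le hτ.le]
    exact ((hCcont (fc τ h n)).norm.pow 2)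
  have intA : ∀ n : ℤ, IntervalIntegrable (fun s => ‖fc τ h' n + A s (fc τ h n)‖^2) volume 0 τ := by
    intro n
    apply ContinuousOn.intervalIntegrable
    rw [uIcc_of_le hτ.le]
    exact ((continuousOn_const.add (hAcont (fc τ h n))).norm.pow 2)
  have intHC : IntervalIntegrable (fun s => (1/τ) * ∫ t in (0:ℝ)..τ, ‖C s (h t)‖^2) volume 0 τ := by
    apply ContinuousOn.intervalIntegrable
    rw [uIcc_of_le hτ.le]
    exact continuousOn_const.mul contC
  have intHA : IntervalIntegrable (fun s => (1/τ) * ∫ t in (0:ℝ)..τ, ‖h' t + A s (h t)‖^2) volume 0 τ := by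
    apply ContinuousOn.intervalIntegrable
    rw [uIcc_of_le hτ.le]
    exact continuousOn_const.mul contA
  -- the finite-sum bound
  have key : ∀ F : Finset ℤ, (∑ n ∈ F, ‖fc τ (fun t => ι (h t)) n‖^2)
      ≤ (1/τ) * ((m^2 / τ) * (∫ s in (0:ℝ)..τ, ∫ t in (0:ℝ)..τ, ‖C s (h t)‖^2)
        + (M^2 / τ) * (∫ s in (0:ℝ)..τ, ∫ t in (0:ℝ)..τ, ‖h' t + A s (h t)‖^2)) := by
    intro F
    have step1 : (∑ n ∈ F, ‖fc τ (fun t => ι (h t)) n‖^2)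
        ≤ ∑ n ∈ F, (m^2 * ((1/τ) * ∫ s in (0:ℝ)..τ, ‖C s (fc τ h n)‖^2)
          + M^2 * ((1/τ) * ∫ s in (0:ℝ)..τ, ‖fc τ h' n + A s (fc τ h n)‖^2)) :=
      Finset.sum_le_sum (fun n _ => hn n)
    have step2 : (∑ n ∈ F, (m^2 * ((1/τ) * ∫ s in (0:ℝ)..τ, ‖C s (fc τ h n)‖^2)
          + M^2 * ((1/τ) * ∫ s in (0:ℝ)..τ, ‖fc τ h' n + A s (fc τ h n)‖^2)))
        = m^2 * ((1/τ) * ∫ s in (0:ℝ)..τ, ∑ n ∈ F, ‖C s (fc τ h n)‖^2)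
          + M^2 * ((1/τ) * ∫ s in (0:ℝ)..τ, ∑ n ∈ F, ‖fc τ h' n + A s (fc τ h n)‖^2) := by
      rw [Finset.sum_add_distrib]
      congr 1
      · rw [← Finset.mul_sum, ← Finset.mul_sum,
          ← intervalIntegral.integral_finset_sum (fun n (_ : n ∈ F) => intC n)]
      · rw [← Finset.mul_sum, ← Finset.mul_sum,
          ← intervalIntegral.integral_finset_sum (fun n (_ : n ∈ F) => intA n)]
    have boundC : (∫ s in (0:ℝ)..τ, ∑ n ∈ F, ‖C s (fc τ h n)‖^2)
        ≤ ∫ s in (0:ℝ)..τ, (1/τ) * ∫ t in (0:ℝ)..τ, ‖C s (h t)‖^2 := by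
      have hintsum : IntervalIntegrable (fun s => ∑ n ∈ F, ‖C s (fc τ h n)‖^2) volume 0 τ := by
        have h2 : (fun s => ∑ n ∈ F, ‖C s (fc τ h n)‖^2)
            = (∑ n ∈ F, fun s => ‖C s (fc τ h n)‖^2) := by funext s; simp
        rw [h2]
        exact IntervalIntegrable.sum F (fun n (_ : n ∈ F) => intC n)
      apply intervalIntegral.integral_mono_on hτ.le hintsum intHC
      intro s hs
      exact sum_le_hasSum F (fun n _ => by positivity) (hPC s hs)
    have boundA : (∫ s in (0:ℝ)..τ, ∑ n ∈ F, ‖fc τ h' n + A s (fc τ h n)‖^2)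
        ≤ ∫ s in (0:ℝ)..τ, (1/τ) * ∫ t in (0:ℝ)..τ, ‖h' t + A s (h t)‖^2 := by
      have hintsum : IntervalIntegrable (fun s => ∑ n ∈ F, ‖fc τ h' n + A s (fc τ h n)‖^2) volume 0 τ := by
        have h2 : (fun s => ∑ n ∈ F, ‖fc τ h' n + A s (fc τ h n)‖^2)
            = (∑ n ∈ F, fun s => ‖fc τ h' n + A s (fc τ h n)‖^2) := by funext s; simp
        rw [h2]
        exact IntervalIntegrable.sum F (fun n (_ : n ∈ F) => intA n)
      apply intervalIntegral.integral_mono_on hτ.le hintsum intHA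
      intro s hs
      exact sum_le_hasSum F (fun n _ => by positivity) (hPA s hs)
    have step3 : m^2 * ((1/τ) * ∫ s in (0:ℝ)..τ, ∑ n ∈ F, ‖C s (fc τ h n)‖^2)
          + M^2 * ((1/τ) * ∫ s in (0:ℝ)..τ, ∑ n ∈ F, ‖fc τ h' n + A s (fc τ h n)‖^2)
        ≤ m^2 * ((1/τ) * ∫ s in (0:ℝ)..τ, (1/τ) * ∫ t in (0:ℝ)..τ, ‖C s (h t)‖^2)
          + M^2 * ((1/τ) * ∫ s in (0:ℝ)..τ, (1/τ) * ∫ t in (0:ℝ)..τ, ‖h' t + A s (h t)‖^2) := by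
      have hτpos : (0:ℝ) < 1/τ := by positivity
      gcongr
    have step4 : m^2 * ((1/τ) * ∫ s in (0:ℝ)..τ, (1/τ) * ∫ t in (0:ℝ)..τ, ‖C s (h t)‖^2)
          + M^2 * ((1/τ) * ∫ s in (0:ℝ)..τ, (1/τ) * ∫ t in (0:ℝ)..τ, ‖h' t + A s (h t)‖^2)
        = (1/τ) * ((m^2 / τ) * (∫ s in (0:ℝ)..τ, ∫ t in (0:ℝ)..τ, ‖C s (h t)‖^2)
          + (M^2 / τ) * (∫ s in (0:ℝ)..τ, ∫ t in (0:ℝ)..τ, ‖h' t + A s (h t)‖^2)) := by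
      rw [intervalIntegral.integral_const_mul, intervalIntegral.integral_const_mul]
      ring
    calc (∑ n ∈ F, ‖fc τ (fun t => ι (h t)) n‖^2) ≤ _ := step1
      _ = _ := step2
      _ ≤ _ := step3
      _ = _ := step4
  -- conclude
  have hle : (∑' n : ℤ, ‖fc τ (fun t => ι (h t)) n‖^2)
      ≤ (1/τ) * ((m^2 / τ) * (∫ s in (0:ℝ)..τ, ∫ t in (0:ℝ)..τ, ‖C s (h t)‖^2)
        + (M^2 / τ) * (∫ s in (0:ℝ)..τ, ∫ t in (0:ℝ)..τ, ‖h' t + A s (h t)‖^2)) :=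
    Summable.tsum_le_of_sum_le hPg.summable key
  rw [hPg.tsum_eq] at hle
  have := (mul_le_mul_iff_right₀ (show (0:ℝ) < 1/τ by positivity)).mp hle
  exact this
end

section
/- (Quasi-contractivity of perturbed evolution families.) Let U(t,s), Ũ(t,s) be an evolution family for the equation x'(t) = A(t)x(t) (i.e. for every v ∈ D, t ↦ U(t,s)(ι v) is differentiable in H with derivative +ι(A(t)(Ũ(t,s)v))). Suppose there is β ≥ 0 such that |Re⟨ι(A(t)v), ι v⟩_H| ≤ β·‖ι v‖²_H for all t ∈ [0,τ] and v ∈ D. Then for all 0 ≤ s ≤ t ≤ τ and all v ∈ D: e^{−β(t−s)}·‖ι v‖_H ≤ ‖U(t,s)(ι v)‖_H ≤ e^{β(t−s)}·‖ι v‖_H. -/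
open MeasureTheory

private lemma aux_antitone {s τ : ℝ} (f f' : ℝ → ℝ) (c : ℝ)
    (hf : ∀ r ∈ Set.Icc s τ, HasDerivWithinAt f (f' r) (Set.Icc s τ) r)
    (hle : ∀ r ∈ Set.Icc s τ, c * f r + f' r ≤ 0) :
    AntitoneOn (fun r => Real.exp (c * r) * f r) (Set.Icc s τ) := by
  have hg : ∀ r ∈ Set.Icc s τ, HasDerivWithinAt (fun r => Real.exp (c * r) * f r)
      (Real.exp (c * r) * (c * 1) * f r + Real.exp (c * r) * f' r) (Set.Icc s τ) r := by
    intro r hr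
    exact (((hasDerivAt_id r).const_mul c).exp.hasDerivWithinAt).mul (hf r hr)
  apply antitoneOn_of_deriv_nonpos (convex_Icc s τ)
  · exact fun r hr => (hg r hr).continuousWithinAt
  · intro x hx
    rw [interior_Icc] at hx
    exact (((hg x (Set.mem_Icc_of_Ioo hx)).hasDerivAt
      (Icc_mem_nhds hx.1 hx.2)).differentiableAt).differentiableWithinAt
  · intro x hx
    rw [interior_Icc] at hx
    have hd := (hg x (Set.mem_Icc_of_Ioo hx)).hasDerivAt (Icc_mem_nhds hx.1 hx.2)
    rw [hd.deriv]
    have h1 := hle x (Set.mem_Icc_of_Ioo hx)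
    have h2 := Real.exp_pos (c * x)
    nlinarith


/-- Quasi-contractivity of perturbed evolution families.

Let `(U, Ut)` be an evolution family for `x'(t) = A(t)x(t)` (the derivative of
`t ↦ U(t,s)(ι v)` is `+A(t)(Ũ(t,s)v)`), and suppose there is `β ≥ 0` with
`|Re⟪A(t)v, ι v⟫| ≤ β‖ι v‖²` for all `t ∈ [0,τ]` and `v ∈ D`.  Then
`e^{−β(t−s)}‖ι v‖ ≤ ‖U(t,s)(ι v)‖ ≤ e^{β(t−s)}‖ι v‖`
for all `0 ≤ s ≤ t ≤ τ` and `v ∈ D`. -/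
theorem quasi_contractivity_of_perturbed_evolution_family
    {H D : Type*}
    [NormedAddCommGroup H] [InnerProductSpace ℂ H] [CompleteSpace H]
    [NormedAddCommGroup D] [InnerProductSpace ℂ D] [CompleteSpace D]
    (τ : ℝ) (hτ : 0 < τ)
    (ι : D →L[ℂ] H) (hι_inj : Function.Injective ι) (hι_dense : DenseRange ι)
    (A : ℝ → D →L[ℂ] H)
    (U : ℝ → ℝ → H →L[ℂ] H) (Ut : ℝ → ℝ → D →ₗ[ℂ] D)
    -- ι ∘ Ũ(t,s) = U(t,s) ∘ ι
    (hcompat : ∀ t s : ℝ, ∀ v : D, ι (Ut t s v) = U t s (ι v))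
    -- U(s,s) = I
    (hid : ∀ s : ℝ, U s s = ContinuousLinearMap.id ℂ H)
    -- U(t,s) U(s,r) = U(t,r)
    (hcocycle : ∀ r s t : ℝ, 0 ≤ r → r ≤ s → s ≤ t → t ≤ τ →
      (U t s).comp (U s r) = U t r)
    -- t ↦ U(t,s)(ι v) is differentiable with derivative +A(t)(Ũ(t,s)v)
    (hderiv_t : ∀ s ∈ Set.Icc (0:ℝ) τ, ∀ v : D, ∀ t ∈ Set.Icc s τ,
      HasDerivWithinAt (fun r => U r s (ι v)) (A t (Ut t s v)) (Set.Icc s τ) t)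
    -- the quasi-dissipativity bound
    (β : ℝ) (hβ : 0 ≤ β)
    (hquasi : ∀ t ∈ Set.Icc (0:ℝ) τ, ∀ v : D,
      |(inner ℂ (A t v) (ι v) : ℂ).re| ≤ β * ‖ι v‖^2) :
    ∀ s t : ℝ, 0 ≤ s → s ≤ t → t ≤ τ → ∀ v : D,
      Real.exp (-β * (t - s)) * ‖ι v‖ ≤ ‖U t s (ι v)‖ ∧
      ‖U t s (ι v)‖ ≤ Real.exp (β * (t - s)) * ‖ι v‖ := by
  intro s t hs0 hst htτ v
  have hsτ : s ≤ τ := hst.trans htτ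
  have hsmem : s ∈ Set.Icc s τ := ⟨le_refl s, hsτ⟩
  have htmem : t ∈ Set.Icc s τ := ⟨hst, htτ⟩
  -- derivative of the squared norm
  have hyd : ∀ r ∈ Set.Icc s τ, HasDerivWithinAt (fun r => ‖U r s (ι v)‖^2)
      (2 * (inner ℂ (A r (Ut r s v)) (U r s (ι v)) : ℂ).re) (Set.Icc s τ) r := by
    intro r hr
    have hd := hderiv_t s ⟨hs0, hsτ⟩ v r hr
    have h1 := HasDerivWithinAt.inner ℂ hd hd
    have h2 := Complex.reCLM.hasFDerivAt.comp_hasDerivWithinAt r h1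
    have hfun : (Complex.reCLM ∘ fun r => (inner ℂ (U r s (ι v)) (U r s (ι v)) : ℂ))
        = fun r => ‖U r s (ι v)‖^2 := by
      funext r
      have := inner_self_eq_norm_sq (𝕜 := ℂ) (U r s (ι v))
      simpa using this
    rw [hfun] at h2
    convert h2 using 1
    · rfl
    · rfl
    have := inner_re_symm (𝕜 := ℂ) (U r s (ι v)) (A r (Ut r s v))
    simp only [Complex.reCLM_apply, Complex.add_re]
    simp only [RCLike.re_to_complex] at this
    ring_nf
    linarith [this]
  -- quasi-dissipativity bound along the flow
  have hbound : ∀ r ∈ Set.Icc s τ,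
      |(inner ℂ (A r (Ut r s v)) (U r s (ι v)) : ℂ).re| ≤ β * ‖U r s (ι v)‖^2 := by
    intro r hr
    have := hquasi r ⟨hs0.trans hr.1, hr.2⟩ (Ut r s v)
    rwa [hcompat r s v] at this
  have hfs : ‖U s s (ι v)‖^2 = ‖ι v‖^2 := by rw [hid s]; simp
  constructor
  · -- lower bound : monotonicity of exp(2βr)‖U r s ι v‖²  via antitone of negative
    have hanti := aux_antitone (fun r => -‖U r s (ι v)‖^2)
      (fun r => -(2 * (inner ℂ (A r (Ut r s v)) (U r s (ι v)) : ℂ).re)) (2*β)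
      (fun r hr => (hyd r hr).neg)
      (by
        intro r hr
        have h1 := hbound r hr
        have h2 := abs_le.mp h1
        beta_reduce
        nlinarith [h2.1])
    have hmono := hanti hsmem htmem hst
    beta_reduce at hmono
    have key : Real.exp (2*β*s) * ‖ι v‖^2 ≤ Real.exp (2*β*t) * ‖U t s (ι v)‖^2 := by
      rw [← hfs]; nlinarith [hmono]
    have key2 : (Real.exp (-β * (t - s)) * ‖ι v‖)^2 ≤ ‖U t s (ι v)‖^2 := by
      have e1 : (Real.exp (-β*(t-s)))^2 = Real.exp (2*β*s) / Real.exp (2*β*t) := by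
        rw [sq, ← Real.exp_add, ← Real.exp_sub]; congr 1; ring
      rw [mul_pow, e1, div_mul_eq_mul_div, div_le_iff₀ (Real.exp_pos _)]
      nlinarith [key]
    have := Real.sqrt_le_sqrt key2
    rwa [Real.sqrt_sq (by positivity), Real.sqrt_sq (norm_nonneg _)] at this
  · -- upper bound
    have hanti := aux_antitone (fun r => ‖U r s (ι v)‖^2)
      (fun r => 2 * (inner ℂ (A r (Ut r s v)) (U r s (ι v)) : ℂ).re) (-(2*β))
      hyd
      (by
        intro r hr
        have h1 := hbound r hr
        have h2 := abs_le.mp h1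
        beta_reduce
        nlinarith [h2.2])
    have hmono := hanti hsmem htmem hst
    beta_reduce at hmono
    have key : Real.exp (-(2*β)*t) * ‖U t s (ι v)‖^2 ≤ Real.exp (-(2*β)*s) * ‖ι v‖^2 := by
      rw [← hfs]; exact hmono
    have key2 : ‖U t s (ι v)‖^2 ≤ (Real.exp (β * (t - s)) * ‖ι v‖)^2 := by
      have e2 : (Real.exp (β*(t-s)))^2 = Real.exp (-(2*β)*s) / Real.exp (-(2*β)*t) := by
        rw [sq, ← Real.exp_add, ← Real.exp_sub]; congr 1; ring
      rw [mul_pow, e2, div_mul_eq_mul_div, le_div_iff₀ (Real.exp_pos _)]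
      nlinarith [key]
    have := Real.sqrt_le_sqrt key2
    rwa [Real.sqrt_sq (norm_nonneg _), Real.sqrt_sq (by positivity)] at this
end
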